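/- arXiv:2112.13438 — 11 statements merged into one kernel-verified Lean document; each statement's English description precedes it below -/
import Mathlib

section
/- If A ⊆ ℝⁿ has Lebesgue measure zero, then the chromatic number of ℝⁿ (with respect to unit distance) equals the chromatic number of ℝⁿ \ A; that is, any proper coloring of ℝⁿ \ A avoiding monochromatic pairs at distance 1 with k colors yields χ(ℝⁿ) ≤ k. -/
/-- If `A ⊆ ℝⁿ` has Lebesgue measure zero, then any proper coloring of `ℝⁿ \ A`
(no two points of `ℝⁿ \ A` at distance 1 share a color) with `k` colors yields a
proper coloring of all of `ℝⁿ` with `k` colors, i.e. `χ(ℝⁿ) ≤ k`. -/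
theorem chromatic_number_measure_zero_removal
    (n k : ℕ) (A : Set (EuclideanSpace ℝ (Fin n)))
    (hA : MeasureTheory.volume A = 0)
    (c : EuclideanSpace ℝ (Fin n) → Fin k)
    (hc : ∀ x ∉ A, ∀ y ∉ A, dist x y = 1 → c x ≠ c y) :
    ∃ c' : EuclideanSpace ℝ (Fin n) → Fin k,
      ∀ x y : EuclideanSpace ℝ (Fin n), dist x y = 1 → c' x ≠ c' y := by
  classical
  set G : SimpleGraph (EuclideanSpace ℝ (Fin n)) :=
    { Adj := fun x y => dist x y = 1
      symm := by constructor; intro x y h; rwa [dist_comm]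
      loopless := by constructor; intro x h; simp at h }
  -- every finite subgraph maps to the complete graph on `Fin k`
  have key : ∀ G' : G.Subgraph, G'.verts.Finite → G'.coe →g (⊤ : SimpleGraph (Fin k)) := by
    intro G' hfin
    -- find a translation avoiding A on all vertices
    have hB : MeasureTheory.volume (⋃ x ∈ G'.verts, (fun t => x + t) ⁻¹' A) = 0 := by
      refine MeasureTheory.measure_biUnion_null_iff hfin.countable |>.2 ?_
      intro x _
      have : MeasureTheory.volume ((fun t => x + t) ⁻¹' A) = MeasureTheory.volume A := by
        exact MeasureTheory.measure_preimage_add _ x A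
      rw [this]; exact hA
    have hne : ((⋃ x ∈ G'.verts, (fun t => x + t) ⁻¹' A) : Set (EuclideanSpace ℝ (Fin n))) ≠ Set.univ := by
      intro h
      rw [h] at hB
      have hpos : 0 < MeasureTheory.volume (Set.univ : Set (EuclideanSpace ℝ (Fin n))) :=
        isOpen_univ.measure_pos MeasureTheory.volume Set.univ_nonempty
      rw [hB] at hpos
      exact lt_irrefl _ hpos
    have hex : ∃ t, t ∉ ⋃ x ∈ G'.verts, (fun t => x + t) ⁻¹' A := by
      by_contra h
      push_neg at h
      exact hne (Set.eq_univ_of_forall h)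
    set t := hex.choose with htdef
    have ht := hex.choose_spec
    have ht' : ∀ x ∈ G'.verts, x + t ∉ A := by
      intro x hx hxA
      exact ht (Set.mem_biUnion hx hxA)
    refine ⟨fun v => c (v.1 + t), ?_⟩
    intro u v huv
    have hadj : G.Adj u.1 v.1 := G'.adj_sub huv
    have hd : dist (u.1 + t) (v.1 + t) = 1 := by
      simpa [dist_add_right] using hadj
    have := hc (u.1 + t) (ht' u.1 u.2) (v.1 + t) (ht' v.1 v.2) hd
    simpa [SimpleGraph.top_adj] using this
  obtain ⟨f⟩ := SimpleGraph.nonempty_hom_of_forall_finite_subgraph_hom key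
  refine ⟨f, fun x y hxy => ?_⟩
  have : (⊤ : SimpleGraph (Fin k)).Adj (f x) (f y) := f.map_rel hxy
  simpa using this
end

section
/- Let G be a finite unit-distance graph embedded in ℝⁿ with χ(G) = χ(ℝⁿ), and suppose c is a proper coloring of ℝⁿ \ A. If for every x in the open unit ball B(0,1) the translate x + G contains a point of A, then the open unit ball is covered by the finitely many sets ((v + B(0,1)) ∩ A) − v for v a vertex of G; in particular A cannot have Lebesgue measure zero. -/
open Pointwise

/-- Let `G` be a finite unit-distance graph (a finite set of points) embedded in `ℝⁿ`
whose chromatic number equals that of `ℝⁿ`, and let `c` be a proper coloring of `ℝⁿ \ A`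
with `k` colors. If for every `x` in the open unit ball `B(0,1)` the translate `x + G`
meets `A`, then the open unit ball is covered by the sets `((v + B(0,1)) ∩ A) − v` for
`v ∈ G`; in particular `A` cannot have Lebesgue measure zero. -/
theorem ball_covered_by_translates_of_A
    (n k : ℕ) (G : Finset (EuclideanSpace ℝ (Fin n)))
    (A : Set (EuclideanSpace ℝ (Fin n)))
    -- χ(G) = χ(ℝⁿ): for every number of colors, G is properly colorable iff ℝⁿ is
    (hGchi : ∀ m : ℕ,
      (∃ g : EuclideanSpace ℝ (Fin n) → Fin m,
        ∀ u ∈ G, ∀ w ∈ G, dist u w = 1 → g u ≠ g w) ↔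
      (∃ g : EuclideanSpace ℝ (Fin n) → Fin m,
        ∀ u w : EuclideanSpace ℝ (Fin n), dist u w = 1 → g u ≠ g w))
    -- c is a proper coloring of ℝⁿ \ A
    (c : EuclideanSpace ℝ (Fin n) → Fin k)
    (hc : ∀ x ∉ A, ∀ y ∉ A, dist x y = 1 → c x ≠ c y)
    -- every translate x + G with x in the open unit ball contains a point of A
    (htrans : ∀ x ∈ Metric.ball (0 : EuclideanSpace ℝ (Fin n)) 1,
      ∃ v ∈ G, x + v ∈ A) :
    (Metric.ball (0 : EuclideanSpace ℝ (Fin n)) 1 ⊆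
      ⋃ v ∈ G, (fun p => p - v) '' ((v +ᵥ Metric.ball (0 : EuclideanSpace ℝ (Fin n)) 1) ∩ A))
    ∧ MeasureTheory.volume A ≠ 0 := by
  have hcov : Metric.ball (0 : EuclideanSpace ℝ (Fin n)) 1 ⊆
      ⋃ v ∈ G, (fun p => p - v) ''
        ((v +ᵥ Metric.ball (0 : EuclideanSpace ℝ (Fin n)) 1) ∩ A) := by
    intro x hx
    obtain ⟨v, hv, hA⟩ := htrans x hx
    refine Set.mem_biUnion hv ⟨x + v, ⟨⟨x, hx, by simp [add_comm]⟩, hA⟩, add_sub_cancel_right x v⟩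
  refine ⟨hcov, fun h0 => ?_⟩
  have hnull : MeasureTheory.volume
      (⋃ v ∈ G, (fun p => p - v) ''
        ((v +ᵥ Metric.ball (0 : EuclideanSpace ℝ (Fin n)) 1) ∩ A)) = 0 := by
    refine (MeasureTheory.measure_biUnion_null_iff G.countable_toSet).2 ?_
    intro v _
    have hsub : (fun p => p - v) ''
        ((v +ᵥ Metric.ball (0 : EuclideanSpace ℝ (Fin n)) 1) ∩ A) ⊆ (-v) +ᵥ A := by
      rintro _ ⟨p, ⟨_, hpA⟩, rfl⟩
      exact ⟨p, hpA, by simp [sub_eq_neg_add]⟩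
    refine MeasureTheory.measure_mono_null hsub ?_
    simpa [MeasureTheory.measure_vadd] using h0
  have hball := MeasureTheory.measure_mono_null hcov hnull
  exact absurd hball
    (Metric.measure_ball_pos MeasureTheory.volume (0 : EuclideanSpace ℝ (Fin n)) one_pos).ne'
end

section
/- For a full rank lattice Λ in ℝⁿ with covering radius R, the Voronoi cell V equals the intersection of the half-spaces {x : x·z ≤ |z|²/2} over only those nonzero z ∈ Λ with |z| ≤ 2R. -/
open scoped RealInnerProductSpace

/-- For a full rank lattice `Λ ⊆ ℝⁿ` with covering radius `R`, the Voronoi cell about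
the origin equals the intersection of the half-spaces `{x : ⟪x, z⟫ ≤ ‖z‖²/2}` over only
those nonzero `z ∈ Λ` with `‖z‖ ≤ 2R`. -/
theorem voronoi_cell_eq_iInter_halfspaces_short_vectors
    (n : ℕ) (b : Module.Basis (Fin n) ℝ (EuclideanSpace ℝ (Fin n)))
    (Λ : Set (EuclideanSpace ℝ (Fin n)))
    (hΛ : Λ = (Submodule.span ℤ (Set.range b) : Submodule ℤ (EuclideanSpace ℝ (Fin n))))
    (R : ℝ)
    (hR : IsLeast {r : ℝ | ∀ x : EuclideanSpace ℝ (Fin n), ∃ z ∈ Λ, dist x z ≤ r} R) :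
    {x : EuclideanSpace ℝ (Fin n) | ∀ z ∈ Λ, ‖x‖ ≤ ‖x - z‖} =
      ⋂ z ∈ {z : EuclideanSpace ℝ (Fin n) | z ∈ Λ ∧ z ≠ 0 ∧ ‖z‖ ≤ 2 * R},
        {x : EuclideanSpace ℝ (Fin n) | ⟪x, z⟫ ≤ ‖z‖ ^ 2 / 2} := by
  set E := EuclideanSpace ℝ (Fin n)
  set L : Submodule ℤ E := Submodule.span ℤ (Set.range b) with hLdef
  have hR0 : 0 ≤ R := by
    obtain ⟨z, _, hz⟩ := hR.1 0
    exact le_trans dist_nonneg hz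
  -- the key algebraic equivalence
  have key : ∀ x z : E, ‖x‖ ≤ ‖x - z‖ ↔ ⟪x, z⟫ ≤ ‖z‖ ^ 2 / 2 := by
    intro x z
    have hsq : ‖x - z‖ ^ 2 = ‖x‖ ^ 2 - 2 * ⟪x, z⟫ + ‖z‖ ^ 2 := norm_sub_sq_real x z
    constructor
    · intro h
      nlinarith [norm_nonneg x, norm_nonneg (x - z)]
    · intro h
      have h2 : ‖x‖ ^ 2 ≤ ‖x - z‖ ^ 2 := by nlinarith
      calc ‖x‖ = Real.sqrt (‖x‖ ^ 2) := (Real.sqrt_sq (norm_nonneg x)).symm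
        _ ≤ Real.sqrt (‖x - z‖ ^ 2) := Real.sqrt_le_sqrt h2
        _ = ‖x - z‖ := Real.sqrt_sq (norm_nonneg (x - z))
  -- finiteness of lattice points in balls
  have hfin : ∀ c : ℝ, (Metric.closedBall (0 : E) c ∩ (L : Set E)).Finite := by
    intro c
    change ((_ : Set E) ∩ L.toAddSubgroup).Finite
    have : DiscreteTopology L.toAddSubgroup :=
      (inferInstance : DiscreteTopology L)
    exact Metric.finite_isBounded_inter_isClosed DiscreteTopology.isDiscrete Metric.isBounded_closedBall inferInstance
  ext x
  simp only [Set.mem_setOf_eq, Set.mem_iInter]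
  constructor
  · intro hx z hz
    exact (key x z).1 (hx z hz.1)
  · intro hx z hz
    rw [hΛ] at hz
    rw [key]
    -- main claim by induction on the number of lattice points in the ball of radius ‖z‖
    have main : ∀ k : ℕ, ∀ z : E, z ∈ L →
        (Metric.closedBall (0 : E) ‖z‖ ∩ (L : Set E)).ncard ≤ k →
        ⟪x, z⟫ ≤ ‖z‖ ^ 2 / 2 := by
      intro k
      induction k with
      | zero =>
        intro z hzL hcard
        exfalso
        have hzmem : z ∈ Metric.closedBall (0 : E) ‖z‖ ∩ (L : Set E) :=
          ⟨by simp [Metric.mem_closedBall], hzL⟩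
        have := (Set.ncard_pos (hfin ‖z‖)).2 ⟨z, hzmem⟩
        omega
      | succ k ih =>
        intro z hzL hcard
        by_cases hshort : ‖z‖ ≤ 2 * R
        · by_cases hz0 : z = 0
          · simp [hz0]
          · exact hx z ⟨by rw [hΛ]; exact hzL, hz0, hshort⟩
        · push_neg at hshort
          obtain ⟨w, hwΛ, hw⟩ := hR.1 ((1/2 : ℝ) • z)
          rw [hΛ] at hwΛ
          have hwL : w ∈ L := hwΛ
          have huL : z - w ∈ L := Submodule.sub_mem L hzL hwL
          have hd : ‖(1/2 : ℝ) • z - w‖ ≤ R := by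
            rwa [dist_eq_norm] at hw
          have hhalf : ‖(1/2 : ℝ) • z‖ = ‖z‖ / 2 := by
            rw [norm_smul]; simp [abs_of_nonneg]; ring
          -- norms strictly smaller
          have hwlt : ‖w‖ < ‖z‖ := by
            have h1 : ‖w‖ - ‖(1/2 : ℝ) • z‖ ≤ ‖w - (1/2 : ℝ) • z‖ := norm_sub_norm_le _ _
            rw [norm_sub_rev] at h1
            linarith [hhalf ▸ h1, hd]
          have huz : z - w - (1/2 : ℝ) • z = (1/2 : ℝ) • z - w := by
            rw [sub_sub, sub_eq_sub_iff_add_eq_add]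
            rw [add_comm w, ← add_assoc, ← add_smul]
            norm_num
          have hult : ‖z - w‖ < ‖z‖ := by
            have h1 : ‖z - w‖ - ‖(1/2 : ℝ) • z‖ ≤ ‖z - w - (1/2 : ℝ) • z‖ :=
              norm_sub_norm_le _ _
            rw [huz] at h1
            linarith [hhalf ▸ h1, hd]
          -- cardinality decreases
          have hcardlt : ∀ v : E, ‖v‖ < ‖z‖ →
              (Metric.closedBall (0 : E) ‖v‖ ∩ (L : Set E)).ncard ≤ k := by
            intro v hv
            have hss : Metric.closedBall (0 : E) ‖v‖ ∩ (L : Set E) ⊂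
                Metric.closedBall (0 : E) ‖z‖ ∩ (L : Set E) := by
              constructor
              · exact Set.inter_subset_inter_left _
                  (Metric.closedBall_subset_closedBall hv.le)
              · intro hsub
                have hzmem : z ∈ Metric.closedBall (0 : E) ‖z‖ ∩ (L : Set E) :=
                  ⟨by simp [Metric.mem_closedBall], hzL⟩
                have := (hsub hzmem).1
                rw [Metric.mem_closedBall, dist_zero_right] at this
                linarith
            have := Set.ncard_lt_ncard hss (hfin ‖z‖)
            omega
          have ihw := ih w hwL (hcardlt w hwlt)
          have ihu := ih (z - w) huL (hcardlt (z - w) hult)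
          -- combine
          have hinner : ⟪x, z⟫ = ⟪x, w⟫ + ⟪x, z - w⟫ := by
            rw [← inner_add_right]
            congr 1
            abel
          have hnu : ‖z - w‖ ^ 2 = ‖z‖ ^ 2 - 2 * ⟪z, w⟫ + ‖w‖ ^ 2 := norm_sub_sq_real z w
          have hnd : ‖(1/2 : ℝ) • z - w‖ ^ 2 =
              ‖(1/2 : ℝ) • z‖ ^ 2 - 2 * ⟪(1/2 : ℝ) • z, w⟫ + ‖w‖ ^ 2 := norm_sub_sq_real _ w
          have hsmul : ⟪(1/2 : ℝ) • z, w⟫ = (1/2 : ℝ) * ⟪z, w⟫ := real_inner_smul_left z w _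
          rw [hsmul, hhalf] at hnd
          have hdsq : ‖(1/2 : ℝ) • z - w‖ ^ 2 ≤ R ^ 2 :=
            pow_le_pow_left₀ (norm_nonneg _) hd 2
          nlinarith
    have hzball : (Metric.closedBall (0 : E) ‖z‖ ∩ (L : Set E)).ncard ≤
        (Metric.closedBall (0 : E) ‖z‖ ∩ (L : Set E)).ncard := le_rfl
    exact main _ z hz hzball
end

section
/- If there exists a full rank lattice Λ in ℝⁿ whose covering radius is at most twice its packing radius, then χ(ℝⁿ) ≤ 3ⁿ. -/
open Submodule Metric Set
open scoped RealInnerProductSpace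

noncomputable local instance auxLinOrdLex (n : ℕ) : LinearOrder (Lex (Fin n → ℝ)) :=
  have : WellFoundedLT (Fin n) := inferInstance
  inferInstance

private lemma aux_coord_int {n : ℕ} (b : Module.Basis (Fin n) ℝ (EuclideanSpace ℝ (Fin n)))
    (z : EuclideanSpace ℝ (Fin n)) (hz : z ∈ span ℤ (Set.range b)) (i : Fin n) :
    ((⌊b.repr z i⌋ : ℤ) : ℝ) = b.repr z i := by
  conv_rhs => rw [← ZSpan.floor_eq_self_of_mem b z hz, ZSpan.repr_floor_apply]

private lemma aux_exists_w {n : ℕ} (b : Module.Basis (Fin n) ℝ (EuclideanSpace ℝ (Fin n)))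
    (z z' : EuclideanSpace ℝ (Fin n)) (hz : z ∈ span ℤ (Set.range b))
    (hz' : z' ∈ span ℤ (Set.range b))
    (hc : ∀ i, ((⌊b.repr z i⌋ : ZMod 3) = (⌊b.repr z' i⌋ : ZMod 3))) :
    ∃ w ∈ span ℤ (Set.range b), z' - z = (3:ℝ) • w := by
  have hint : ∀ i, (3:ℤ) ∣ (⌊b.repr z' i⌋ - ⌊b.repr z i⌋) := by
    intro i
    have h2 : ((⌊b.repr z' i⌋ - ⌊b.repr z i⌋ : ℤ) : ZMod 3) = 0 := by
      push_cast
      rw [← hc i]; ring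
    exact_mod_cast (ZMod.intCast_zmod_eq_zero_iff_dvd _ 3).1 h2
  choose k hk using hint
  refine ⟨∑ i, (k i : ℝ) • b i, Submodule.sum_mem _ fun i _ => ?_, ?_⟩
  · rw [Int.cast_smul_eq_zsmul]
    exact Submodule.smul_mem _ _ (Submodule.subset_span (Set.mem_range_self i))
  · have e1 : z = ∑ i, ((⌊b.repr z i⌋ : ℤ) : ℝ) • b i := by
      conv_lhs => rw [← b.sum_repr z]
      exact Finset.sum_congr rfl fun i _ => by rw [aux_coord_int b z hz]
    have e1' : z' = ∑ i, ((⌊b.repr z' i⌋ : ℤ) : ℝ) • b i := by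
      conv_lhs => rw [← b.sum_repr z']
      exact Finset.sum_congr rfl fun i _ => by rw [aux_coord_int b z' hz']
    rw [e1, e1', Finset.smul_sum, ← Finset.sum_sub_distrib]
    refine Finset.sum_congr rfl fun i _ => ?_
    rw [← sub_smul, smul_smul]
    congr 1
    have h3 : ((⌊b.repr z' i⌋ - ⌊b.repr z i⌋ : ℤ) : ℝ) = ((3 * k i : ℤ) : ℝ) := congrArg _ (hk i)
    push_cast at h3
    linarith

private lemma aux_min_norm {n : ℕ} (b : Module.Basis (Fin n) ℝ (EuclideanSpace ℝ (Fin n))) :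
    ∃ ε > 0, ∀ v ∈ span ℤ (Set.range b), v ≠ 0 → ε ≤ ‖v‖ := by
  have h0 : IsOpen ({0} : Set (span ℤ (Set.range b))) := isOpen_discrete _
  rw [Metric.isOpen_singleton_iff] at h0
  obtain ⟨ε, hε, h⟩ := h0
  refine ⟨ε, hε, fun v hv hv0 => ?_⟩
  by_contra hlt
  push_neg at hlt
  have := h ⟨v, hv⟩ (by simpa [dist_eq_norm] using hlt)
  exact hv0 (by simpa [Subtype.ext_iff] using this)

private lemma aux_finite {n : ℕ} (b : Module.Basis (Fin n) ℝ (EuclideanSpace ℝ (Fin n)))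
    (x : EuclideanSpace ℝ (Fin n)) (ρ : ℝ) :
    (Metric.closedBall x ρ ∩
      ((span ℤ (Set.range b) : Submodule ℤ (EuclideanSpace ℝ (Fin n))) :
        Set (EuclideanSpace ℝ (Fin n)))).Finite := by
  have hd : DiscreteTopology ((span ℤ (Set.range b) : Submodule ℤ (EuclideanSpace ℝ (Fin n))) :
      Set (EuclideanSpace ℝ (Fin n))) :=
    inferInstanceAs (DiscreteTopology (span ℤ (Set.range b)))
  have hc : IsClosed ((span ℤ (Set.range b) : Submodule ℤ (EuclideanSpace ℝ (Fin n))) :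
      Set (EuclideanSpace ℝ (Fin n))) :=
    AddSubgroup.isClosed_of_discrete (H := (span ℤ (Set.range b)).toAddSubgroup)
  exact Metric.finite_isBounded_inter_isClosed DiscreteTopology.isDiscrete Metric.isBounded_closedBall hc

/-- Existence of a lex-minimal nearest lattice point. -/
private lemma aux_sel {n : ℕ} (b : Module.Basis (Fin n) ℝ (EuclideanSpace ℝ (Fin n))) {R : ℝ}
    (hcov : ∀ x : EuclideanSpace ℝ (Fin n), ∃ z ∈ span ℤ (Set.range b), dist x z ≤ R)
    (X : EuclideanSpace ℝ (Fin n)) :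
    ∃ z, z ∈ span ℤ (Set.range b) ∧ (∀ p ∈ span ℤ (Set.range b), dist X z ≤ dist X p) ∧
      ∀ p ∈ span ℤ (Set.range b), (∀ q ∈ span ℤ (Set.range b), dist X p ≤ dist X q) →
        toLex (b.equivFun z) ≤ toLex (b.equivFun p) := by
  obtain ⟨z₀, hz₀L, hz₀R⟩ := hcov X
  set L : Set (EuclideanSpace ℝ (Fin n)) :=
    ((span ℤ (Set.range b) : Submodule ℤ (EuclideanSpace ℝ (Fin n))) :
      Set (EuclideanSpace ℝ (Fin n))) with hL
  set S : Set (EuclideanSpace ℝ (Fin n)) := Metric.closedBall X R ∩ L with hS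
  have hSfin : S.Finite := aux_finite b X R
  have hz₀S : z₀ ∈ S := ⟨by simpa [Metric.mem_closedBall, dist_comm] using hz₀R, hz₀L⟩
  obtain ⟨z₁, hz₁S, hz₁min⟩ := Set.exists_min_image S (dist X) hSfin ⟨z₀, hz₀S⟩
  have hz₁glob : ∀ p ∈ span ℤ (Set.range b), dist X z₁ ≤ dist X p := by
    intro p hp
    by_cases hpS : p ∈ Metric.closedBall X R
    · exact hz₁min p ⟨hpS, hp⟩
    · have h1 : dist X z₁ ≤ R := le_trans (hz₁min z₀ hz₀S) hz₀R
      have h2 : R < dist X p := by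
        simpa [Metric.mem_closedBall, dist_comm] using hpS
      linarith
  set N : Set (EuclideanSpace ℝ (Fin n)) :=
    S ∩ {p | ∀ q ∈ span ℤ (Set.range b), dist X p ≤ dist X q} with hN
  have hNfin : N.Finite := hSfin.subset Set.inter_subset_left
  have hz₁N : z₁ ∈ N := ⟨hz₁S, hz₁glob⟩
  obtain ⟨z, hzN, hzmin⟩ :=
    Set.exists_min_image N (fun p => (toLex (b.equivFun p) : Lex (Fin n → ℝ))) hNfin ⟨z₁, hz₁N⟩
  refine ⟨z, hzN.1.2, hzN.2, fun p hpL hpnear => ?_⟩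
  have hpS : p ∈ S := by
    refine ⟨?_, hpL⟩
    have := hpnear z₀ hz₀L
    simpa [Metric.mem_closedBall, dist_comm] using le_trans this hz₀R
  exact hzmin p ⟨hpS, hpnear⟩

private lemma aux_inner_le {n : ℕ} (X z w : EuclideanSpace ℝ (Fin n))
    (hd : dist X z ≤ dist X (z + w)) : ⟪X - z, w⟫ ≤ ‖w‖ ^ 2 / 2 := by
  rw [dist_eq_norm, dist_eq_norm] at hd
  have he : X - (z + w) = (X - z) - w := by abel
  rw [he] at hd
  have h2 : ‖X - z‖ ^ 2 ≤ ‖X - z - w‖ ^ 2 := by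
    have := norm_nonneg (X - z)
    nlinarith [norm_nonneg (X - z - w)]
  rw [norm_sub_sq_real (X - z) w] at h2
  linarith

private lemma aux_dist_eq {n : ℕ} (X z w : EuclideanSpace ℝ (Fin n))
    (he : ⟪X - z, w⟫ = ‖w‖ ^ 2 / 2) : dist X (z + w) = dist X z := by
  rw [dist_eq_norm, dist_eq_norm]
  have h1 : X - (z + w) = (X - z) - w := by abel
  rw [h1]
  have h2 : ‖X - z - w‖ ^ 2 = ‖X - z‖ ^ 2 := by
    rw [norm_sub_sq_real (X - z) w]; linarith
  nlinarith [norm_nonneg (X - z - w), norm_nonneg (X - z)]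

/-- At a point realizing the covering radius, the nearest lattice point is not unique. -/
private lemma aux_tie {n : ℕ} (b : Module.Basis (Fin n) ℝ (EuclideanSpace ℝ (Fin n))) {R : ℝ}
    (hcov : ∀ x : EuclideanSpace ℝ (Fin n), ∃ z ∈ span ℤ (Set.range b), dist x z ≤ R)
    {X z : EuclideanSpace ℝ (Fin n)} (hz : z ∈ span ℤ (Set.range b))
    (hnear : ∀ p ∈ span ℤ (Set.range b), dist X z ≤ dist X p)
    (hXz : dist X z = R) (hR : 0 < R) :
    ∃ p ∈ span ℤ (Set.range b), p ≠ z ∧ dist X p = R := by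
  by_contra hcon
  push_neg at hcon
  have hstrict : ∀ p ∈ span ℤ (Set.range b), p ≠ z → R < dist X p := by
    intro p hp hpz
    rcases lt_or_eq_of_le (hXz ▸ hnear p hp) with h | h
    · exact h
    · exact absurd h.symm (hcon p hp hpz)
  set T : Set (EuclideanSpace ℝ (Fin n)) :=
    (Metric.closedBall X (R + 1) ∩
      ((span ℤ (Set.range b) : Submodule ℤ (EuclideanSpace ℝ (Fin n))) :
        Set (EuclideanSpace ℝ (Fin n)))) \ {z} with hT
  have hTfin : T.Finite := (aux_finite b X (R + 1)).subset Set.diff_subset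
  have hdelta : ∃ δ > 0, ∀ p ∈ T, R + δ ≤ dist X p := by
    rcases Set.eq_empty_or_nonempty T with hTe | hTne
    · exact ⟨1, one_pos, fun p hp => absurd (hTe ▸ hp) (Set.notMem_empty p)⟩
    · obtain ⟨p₀, hp₀T, hp₀min⟩ := Set.exists_min_image T (dist X) hTfin hTne
      refine ⟨dist X p₀ - R, ?_, fun p hp => by linarith [hp₀min p hp]⟩
      have := hstrict p₀ hp₀T.1.2 hp₀T.2
      linarith
  obtain ⟨δ, hδ, hTbound⟩ := hdelta
  set ε : ℝ := min δ 1 / 2 with hε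
  have hε0 : 0 < ε := by positivity
  have hεδ : ε < δ := by
    have : min δ 1 ≤ δ := min_le_left _ _
    linarith
  have hε1 : ε ≤ 1 / 2 := by
    have : min δ 1 ≤ 1 := min_le_right _ _
    linarith
  set X' : EuclideanSpace ℝ (Fin n) := X + (ε / R) • (X - z) with hX'
  have hXz' : ‖X - z‖ = R := by rw [← dist_eq_norm]; exact hXz
  have hX'z : dist X' z = R + ε := by
    have h1 : X' - z = (1 + ε / R) • (X - z) := by
      rw [hX']
      rw [add_smul, one_smul]
      abel
    rw [dist_eq_norm, h1, norm_smul, hXz', Real.norm_eq_abs]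
    rw [abs_of_pos (by positivity)]
    field_simp
  have hX'X : dist X X' = ε := by
    have h1 : X - X' = -((ε / R) • (X - z)) := by rw [hX']; abel
    rw [dist_eq_norm, h1, norm_neg, norm_smul, hXz', Real.norm_eq_abs,
      abs_of_pos (by positivity)]
    field_simp
  obtain ⟨q, hqL, hqR⟩ := hcov X'
  by_cases hqz : q = z
  · rw [hqz, hX'z] at hqR
    linarith
  · have hq1 : dist X q ≤ ε + R := by
      calc dist X q ≤ dist X X' + dist X' q := dist_triangle _ _ _
        _ ≤ ε + R := by rw [hX'X]; linarith
    have hqT : q ∈ T := by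
      refine ⟨⟨?_, hqL⟩, hqz⟩
      simp only [Metric.mem_closedBall]
      rw [dist_comm]
      linarith
    have := hTbound q hqT
    linarith

set_option maxHeartbeats 1000000 in
/-- If there exists a full rank lattice `Λ` in `ℝⁿ` whose covering radius is at most
twice its packing radius, then `χ(ℝⁿ) ≤ 3ⁿ`. -/
theorem chromatic_le_three_pow_of_covering_packing_two
    (n : ℕ)
    (h : ∃ (b : Module.Basis (Fin n) ℝ (EuclideanSpace ℝ (Fin n)))
           (Λ : Set (EuclideanSpace ℝ (Fin n))) (r R : ℝ),
      Λ = (Submodule.span ℤ (Set.range b) : Submodule ℤ (EuclideanSpace ℝ (Fin n)))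
      -- r is the packing radius of Λ
      ∧ IsGreatest {s : ℝ | ∀ v ∈ Λ, v ≠ 0 → 2 * s ≤ ‖v‖} r
      -- R is the covering radius of Λ
      ∧ IsLeast {s : ℝ | ∀ x : EuclideanSpace ℝ (Fin n), ∃ z ∈ Λ, dist x z ≤ s} R
      -- covering-packing ratio at most 2
      ∧ R ≤ 2 * r) :
    ∃ c : EuclideanSpace ℝ (Fin n) → Fin (3 ^ n),
      ∀ x y : EuclideanSpace ℝ (Fin n), dist x y = 1 → c x ≠ c y := by
  obtain ⟨b, Λ, r, R, hΛ, hr, hR, hRr⟩ := h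
  have hpack : ∀ v ∈ span ℤ (Set.range b), v ≠ 0 → 2 * r ≤ ‖v‖ := by
    intro v hv hv0
    exact hr.1 v (by rw [hΛ]; exact hv) hv0
  have hcov : ∀ x : EuclideanSpace ℝ (Fin n), ∃ z ∈ span ℤ (Set.range b), dist x z ≤ R := by
    intro x
    obtain ⟨z, hz, hd⟩ := hR.1 x
    exact ⟨z, by rw [hΛ] at hz; exact hz, hd⟩
  -- r is positive
  have hrpos : 0 < r := by
    obtain ⟨ε, hε, hmin⟩ := aux_min_norm b
    have : ε / 2 ≤ r := by
      refine hr.2 ?_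
      intro v hv hv0
      have := hmin v (by rw [hΛ] at hv; exact hv) hv0
      linarith
    linarith
  -- the selection function
  choose sel hselL hselN hselM using aux_sel b hcov
  have hseldist : ∀ X, dist X (sel X) ≤ R := by
    intro X
    obtain ⟨z₀, hz₀, hd₀⟩ := hcov X
    exact le_trans (hselN X z₀ hz₀) hd₀
  -- key lemma: points at distance 4r get different labels
  have key : ∀ X Y : EuclideanSpace ℝ (Fin n), dist X Y = 4 * r →
      (∀ i, ((⌊b.repr (sel X) i⌋ : ZMod 3) = (⌊b.repr (sel Y) i⌋ : ZMod 3))) → False := by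
    intro X Y hXY hcol
    obtain ⟨w, hwL, hw3⟩ := aux_exists_w b (sel X) (sel Y) (hselL X) (hselL Y) hcol
    set z := sel X with hz
    set z' := sel Y with hz'
    have hdX : dist X z ≤ R := hseldist X
    have hdY : dist Y z' ≤ R := hseldist Y
    -- lex helper
    have lexadd : ∀ (a c : EuclideanSpace ℝ (Fin n)),
        toLex (b.equivFun (a + c)) = toLex (b.equivFun a) + toLex (b.equivFun c) := by
      intro a c; rw [map_add]; rfl
    have lexdone : ∀ w' : EuclideanSpace ℝ (Fin n), w' ∈ span ℤ (Set.range b) →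
        (∀ q ∈ span ℤ (Set.range b), dist X (z + w') ≤ dist X q) →
        (∀ q ∈ span ℤ (Set.range b), dist Y (z' - w') ≤ dist Y q) → w' = 0 := by
      intro w' hw'L hnX hnY
      have h1 := hselM X (z + w') (Submodule.add_mem _ (hselL X) hw'L) hnX
      have h2 := hselM Y (z' - w') (Submodule.sub_mem _ (hselL Y) hw'L) hnY
      rw [← hz] at h1
      rw [← hz'] at h2
      rw [lexadd] at h1
      have h1' : (0 : Lex (Fin n → ℝ)) ≤ toLex (b.equivFun w') :=
        (le_add_iff_nonneg_right _).1 h1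
      have h2a : z' - w' = z' + (-w') := by abel
      rw [h2a, lexadd] at h2
      have h2' : (0 : Lex (Fin n → ℝ)) ≤ toLex (b.equivFun (-w')) :=
        (le_add_iff_nonneg_right _).1 h2
      have h2'' : toLex (b.equivFun (-w')) = -toLex (b.equivFun w') := by
        rw [map_neg]; rfl
      rw [h2''] at h2'
      have hzero : toLex (b.equivFun w') = 0 := le_antisymm (neg_nonneg.1 h2') h1'
      have hz0 : b.equivFun w' = 0 := hzero
      exact b.equivFun.map_eq_zero_iff.1 hz0
    rcases eq_or_ne w 0 with hw0 | hw0
    · -- same nearest point; antipodal configuration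
      rw [hw0, smul_zero] at hw3
      have hzz : z' = z := by
        have := sub_eq_zero.1 hw3
        exact this
      rw [hzz] at hdY
      have htri : dist X Y ≤ dist X z + dist Y z := by
        rw [dist_comm Y z]
        exact dist_triangle _ _ _
      have hdXe : dist X z = 2 * r := by linarith
      have hdYe : dist Y z = 2 * r := by linarith
      have hRe : R = 2 * r := by linarith
      -- antipodal
      have hna : ‖X - z‖ = 2 * r := by rw [← dist_eq_norm]; exact hdXe
      have hnb : ‖Y - z‖ = 2 * r := by rw [← dist_eq_norm]; exact hdYe
      have hnab : ‖(X - z) - (Y - z)‖ = 4 * r := by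
        have : (X - z) - (Y - z) = X - Y := by abel
        rw [this, ← dist_eq_norm]; exact hXY
      have hip : ⟪X - z, Y - z⟫ = -(4 * r ^ 2) := by
        have := norm_sub_sq_real (X - z) (Y - z)
        rw [hnab, hna, hnb] at this
        nlinarith
      have hcs : ⟪X - z, -(Y - z)⟫ = ‖X - z‖ * ‖-(Y - z)‖ := by
        rw [inner_neg_right, hip, hna, norm_neg, hnb]
        ring
      have hanti : X - z = -(Y - z) := by
        have h5 := inner_eq_norm_mul_iff_real.1 hcs
        rw [norm_neg, hnb, hna] at h5
        have h2r : (2 * r : ℝ) ≠ 0 := by positivity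
        exact smul_right_injective _ h2r h5
      -- find a second nearest point
      obtain ⟨p, hpL, hpz, hpdist⟩ := aux_tie b hcov (hselL X) (fun q hq => hselN X q hq)
        (by rw [← hz]; linarith) (by linarith)
      set w' := p - z with hw'
      have hw'L : w' ∈ span ℤ (Set.range b) := Submodule.sub_mem _ hpL (hselL X)
      have hw'0 : w' ≠ 0 := fun hc => hpz (by rwa [hw', sub_eq_zero] at hc)
      have hnX : ∀ q ∈ span ℤ (Set.range b), dist X (z + w') ≤ dist X q := by
        intro q hq
        have hzwp : z + w' = p := by rw [hw']; abel
        rw [hzwp, hpdist, hRe, ← hdXe]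
        exact hselN X q hq
      have hnY : ∀ q ∈ span ℤ (Set.range b), dist Y (z' - w') ≤ dist Y q := by
        intro q hq
        have hYz : Y - z = -(X - z) := by rw [hanti, neg_neg]
        have hYd : dist Y (z' - w') = dist X p := by
          rw [hzz, dist_eq_norm, dist_eq_norm]
          have h7 : Y - (z - w') = (Y - z) + (p - z) := by rw [hw']; abel
          rw [h7, hYz]
          have h8 : -(X - z) + (p - z) = -(X - p) := by abel
          rw [h8, norm_neg]
        rw [hYd, hpdist]
        have h11 : dist Y z' ≤ dist Y q := hselN Y q hq
        have h12 : dist Y z' = 2 * r := by rw [hzz]; exact hdYe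
        linarith
      exact hw'0 (lexdone w' hw'L hnX hnY)
    · -- distinct nearest points
      have hwn : 2 * r ≤ ‖w‖ := hpack w hwL hw0
      have A1 : ⟪X - z, w⟫ ≤ ‖w‖ ^ 2 / 2 :=
        aux_inner_le X z w (hselN X (z + w) (Submodule.add_mem _ (hselL X) hwL))
      have A2 : ⟪Y - z', -w⟫ ≤ ‖-w‖ ^ 2 / 2 := by
        have h8 : z' + -w = z' - w := by abel
        exact aux_inner_le Y z' (-w)
          (by rw [h8]; exact hselN Y (z' - w) (Submodule.sub_mem _ (hselL Y) hwL))
      rw [norm_neg, inner_neg_right] at A2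
      have hYX : Y - X = (3:ℝ) • w + (Y - z') - (X - z) := by
        rw [← hw3]
        abel
      have hinner : ⟪Y - X, w⟫ = 3 * ‖w‖ ^ 2 + ⟪Y - z', w⟫ - ⟪X - z, w⟫ := by
        rw [hYX, inner_sub_left, inner_add_left, real_inner_smul_left,
          real_inner_self_eq_norm_sq]
      have hCS : ⟪Y - X, w⟫ ≤ 4 * r * ‖w‖ := by
        have h9 := real_inner_le_norm (Y - X) w
        have h10 : ‖Y - X‖ = 4 * r := by
          rw [← dist_eq_norm, dist_comm]; exact hXY
        rw [h10] at h9
        exact h9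
      have hwe : ‖w‖ = 2 * r := by nlinarith
      have hA1e : ⟪X - z, w⟫ = ‖w‖ ^ 2 / 2 := by nlinarith
      have hA2e : ⟪Y - z', -w⟫ = ‖-w‖ ^ 2 / 2 := by
        rw [norm_neg, inner_neg_right]
        nlinarith
      have hnX : ∀ q ∈ span ℤ (Set.range b), dist X (z + w) ≤ dist X q := by
        intro q hq
        rw [aux_dist_eq X z w hA1e]
        exact hselN X q hq
      have hnY : ∀ q ∈ span ℤ (Set.range b), dist Y (z' - w) ≤ dist Y q := by
        intro q hq
        have h8 : z' + -w = z' - w := by abel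
        rw [← h8, aux_dist_eq Y z' (-w) hA2e]
        exact hselN Y q hq
      exact hw0 (lexdone w hwL hnX hnY)
  -- assemble the coloring
  have hcard : Fintype.card (Fin n → ZMod 3) = 3 ^ n := by
    simp [Fintype.card_fun]
  obtain ⟨e⟩ : Nonempty ((Fin n → ZMod 3) ≃ Fin (3 ^ n)) :=
    ⟨Fintype.equivFinOfCardEq hcard⟩
  refine ⟨fun x => e (fun i => ((⌊b.repr (sel ((4 * r) • x)) i⌋ : ZMod 3))), ?_⟩
  intro x y hxy hcxy
  have hcol : ∀ i, ((⌊b.repr (sel ((4 * r) • x)) i⌋ : ZMod 3)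
      = (⌊b.repr (sel ((4 * r) • y)) i⌋ : ZMod 3)) := by
    intro i
    exact congrFun (e.injective hcxy) i
  have hdist : dist ((4 * r) • x) ((4 * r) • y) = 4 * r := by
    rw [dist_smul₀, hxy, mul_one, Real.norm_eq_abs, abs_of_pos (by positivity)]
  exact key _ _ hdist hcol
end

section
/- Let W be a finite family of unit vectors in ℝᵐ, let G be the finite group of isometries of the subspace X generated by the reflections R_w (w ∈ W), and let K = {x ∈ X : x·w ≥ 0 for all w ∈ W} have nonempty relative interior in X. Then for every x ∈ X there exists g ∈ G with g(x) ∈ K. -/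
open scoped RealInnerProductSpace

noncomputable def reflIso (m : ℕ) (X : Submodule ℝ (EuclideanSpace ℝ (Fin m)))
    (w : EuclideanSpace ℝ (Fin m)) (hw : ‖w‖ = 1)
    (hX : ∀ x ∈ X, x - (2 * ⟪x, w⟫) • w ∈ X) : X ≃ₗᵢ[ℝ] X := by
  have hww : ⟪w, w⟫ = 1 := by rw [real_inner_self_eq_norm_sq, hw]; norm_num
  have hinv : ∀ x : EuclideanSpace ℝ (Fin m),
      (x - (2 * ⟪x, w⟫) • w) - (2 * ⟪x - (2 * ⟪x, w⟫) • w, w⟫) • w = x := by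
    intro x
    rw [inner_sub_left, real_inner_smul_left, hww]
    module
  refine LinearIsometryEquiv.mk
    { toFun := fun x => ⟨(x : EuclideanSpace ℝ (Fin m)) - (2 * ⟪(x : EuclideanSpace ℝ (Fin m)), w⟫) • w, hX x x.2⟩
      invFun := fun x => ⟨(x : EuclideanSpace ℝ (Fin m)) - (2 * ⟪(x : EuclideanSpace ℝ (Fin m)), w⟫) • w, hX x x.2⟩
      map_add' := ?_
      map_smul' := ?_
      left_inv := ?_
      right_inv := ?_ } ?_
  · intro x y
    apply Subtype.ext
    simp only [Submodule.coe_add]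
    rw [inner_add_left]
    module
  · intro c x
    apply Subtype.ext
    simp only [Submodule.coe_smul, RingHom.id_apply, SetLike.val_smul]
    rw [real_inner_smul_left]
    module
  · intro x; exact Subtype.ext (hinv x)
  · intro x; exact Subtype.ext (hinv x)
  · intro x
    have h2 : ‖(x : EuclideanSpace ℝ (Fin m)) - (2 * ⟪(x : EuclideanSpace ℝ (Fin m)), w⟫) • w‖ ^ 2
        = ‖(x : EuclideanSpace ℝ (Fin m))‖ ^ 2 := by
      rw [norm_sub_sq_real, real_inner_smul_right, norm_smul, hw, mul_one,
        Real.norm_eq_abs, sq_abs]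
      ring
    have := congrArg Real.sqrt h2
    rw [Real.sqrt_sq (norm_nonneg _), Real.sqrt_sq (norm_nonneg _)] at this
    simpa [Submodule.coe_norm] using this

/-- Let `W` be a finite family of unit vectors in `ℝᵐ`, let `X` be a subspace invariant
under each reflection `R_w` (`w ∈ W`), let `G` be the finite group of isometries of `X`
generated by the restrictions of the reflections `R_w`, and let
`K = {x ∈ X : x·w ≥ 0 for all w ∈ W}` have nonempty relative interior in `X`.
Then for every `x ∈ X` there exists `g ∈ G` with `g(x) ∈ K`. -/
theorem exists_reflection_group_elt_into_cone
    (m : ℕ) (X : Submodule ℝ (EuclideanSpace ℝ (Fin m)))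
    (W : Finset (EuclideanSpace ℝ (Fin m)))
    (hW : ∀ w ∈ W, ‖w‖ = 1)
    -- X is invariant under each reflection R_w
    (hXinv : ∀ w ∈ W, ∀ x ∈ X, x - (2 * ⟪x, w⟫) • w ∈ X)
    (G : Subgroup (X ≃ₗᵢ[ℝ] X))
    (hG : G = Subgroup.closure
      {g : X ≃ₗᵢ[ℝ] X | ∃ w ∈ W, ∀ x : X, (g x : EuclideanSpace ℝ (Fin m))
        = (x : EuclideanSpace ℝ (Fin m)) - (2 * ⟪(x : EuclideanSpace ℝ (Fin m)), w⟫) • w})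
    (hGfin : Finite G)
    (K : Set X)
    (hK : K = {x : X | ∀ w ∈ W, 0 ≤ ⟪(x : EuclideanSpace ℝ (Fin m)), w⟫})
    -- K has nonempty relative interior in X
    (hKint : (interior K).Nonempty) :
    ∀ x : X, ∃ g ∈ G, g x ∈ K := by
  obtain ⟨z, hz⟩ := hKint
  -- key claim : interior points pair strictly positively with relevant w's
  have key : ∀ w ∈ W, ∀ y : X, ⟪(y : EuclideanSpace ℝ (Fin m)), w⟫ < 0 →
      0 < ⟪(z : EuclideanSpace ℝ (Fin m)), w⟫ := by
    intro w hw y hy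
    obtain ⟨ε, hε, hball⟩ := Metric.mem_nhds_iff.mp (mem_interior_iff_mem_nhds.mp hz)
    have hy0 : y ≠ 0 := by
      intro h; rw [h] at hy; simp at hy
    have hny : (0:ℝ) < ‖y‖ := norm_pos_iff.mpr hy0
    set t : ℝ := ε / (2 * ‖y‖) with ht
    have htpos : 0 < t := div_pos hε (by positivity)
    have hmem : z + t • y ∈ K := by
      apply hball
      rw [Metric.mem_ball, dist_eq_norm, add_sub_cancel_left, norm_smul,
        Real.norm_eq_abs, abs_of_pos htpos]
      have hcy : (y : EuclideanSpace ℝ (Fin m)) ≠ 0 := by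
        simpa using hy0
      have heq : t * ‖y‖ = ε / 2 := by
        rw [ht]
        field_simp [norm_ne_zero_iff.mpr hcy]
      rw [heq]; linarith
    rw [hK] at hmem
    have := hmem w hw
    simp only [Submodule.coe_add, SetLike.val_smul] at this
    rw [inner_add_left, real_inner_smul_left] at this
    nlinarith
  intro x
  haveI : Nonempty G := ⟨1⟩
  obtain ⟨g, hgmax⟩ := Finite.exists_max
    (fun g : G => ⟪(((g : X ≃ₗᵢ[ℝ] X) x : X) : EuclideanSpace ℝ (Fin m)),
      (z : EuclideanSpace ℝ (Fin m))⟫)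
  refine ⟨(g : X ≃ₗᵢ[ℝ] X), g.2, ?_⟩
  rw [hK]
  intro w hw
  by_contra hneg
  push_neg at hneg
  set s := reflIso m X w (hW w hw) (hXinv w hw) with hs
  have hsformula : ∀ v : X, (s v : EuclideanSpace ℝ (Fin m))
      = (v : EuclideanSpace ℝ (Fin m)) - (2 * ⟪(v : EuclideanSpace ℝ (Fin m)), w⟫) • w :=
    fun v => rfl
  have hsG : s ∈ G := by
    rw [hG]
    exact Subgroup.subset_closure ⟨w, hw, hsformula⟩
  set g' : G := ⟨s, hsG⟩ * g with hg'
  have hcontr := hgmax g'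
  have hval : (((g' : X ≃ₗᵢ[ℝ] X) x : X) : EuclideanSpace ℝ (Fin m))
      = (((g : X ≃ₗᵢ[ℝ] X) x : X) : EuclideanSpace ℝ (Fin m))
        - (2 * ⟪(((g : X ≃ₗᵢ[ℝ] X) x : X) : EuclideanSpace ℝ (Fin m)), w⟫) • w := by
    rw [hg']
    exact hsformula _
  rw [hval] at hcontr
  rw [inner_sub_left, real_inner_smul_left] at hcontr
  have hzw := key w hw ((g : X ≃ₗᵢ[ℝ] X) x) hneg
  rw [real_inner_comm] at hzw
  nlinarith [mul_pos (neg_pos.mpr hneg) hzw]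
end

section
/- Let Λ be a lattice spanning X ⊆ ℝᵐ with Voronoi cell V (restricted to X) and let W be unit vectors with R_w(Λ) = Λ for all w ∈ W; let G be the (finite) generated reflection group, K = {x ∈ X : x·w ≥ 0 ∀ w ∈ W} with nonempty relative interior, and V₁ = K ∩ V. Then for every x ∈ K, dist(V, x + V) = 2·dist(V₁, x/2). -/
open scoped RealInnerProductSpace

section aux
variable {F : Type*} [NormedAddCommGroup F] [InnerProductSpace ℝ F]

lemma myrefl_norm_sq (w : F) (hw : ‖w‖ = 1) (q c : F) :
    ‖q - (c - (2 * ⟪c, w⟫) • w)‖ ^ 2 = ‖q - c‖ ^ 2 + 4 * ⟪c, w⟫ * ⟪q, w⟫ := by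
  have h1 : q - (c - (2 * ⟪c, w⟫) • w) = (q - c) + (2 * ⟪c, w⟫) • w := by abel
  rw [h1, norm_add_sq_real, real_inner_smul_right, norm_smul, inner_sub_left]
  simp [hw, abs_mul_abs_self]
  rw [mul_pow, sq_abs]; ring

lemma myrefl_sub (w a b : F) :
    (a - (2 * ⟪a, w⟫) • w) - (b - (2 * ⟪b, w⟫) • w) = (a - b) - (2 * ⟪a - b, w⟫) • w := by
  rw [inner_sub_left]; module

lemma myrefl_norm (w : F) (hw : ‖w‖ = 1) (c : F) :
    ‖c - (2 * ⟪c, w⟫) • w‖ = ‖c‖ := by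
  have := myrefl_norm_sq w hw 0 c
  simp at this
  rw [norm_sub_rev] at this
  exact this

lemma myrefl_inner (w : F) (hw : ‖w‖ = 1) (c : F) :
    ⟪c - (2 * ⟪c, w⟫) • w, w⟫ = -⟪c, w⟫ := by
  have hw2 : ⟪w, w⟫ = 1 := by
    rw [real_inner_self_eq_norm_sq, hw]; norm_num
  rw [inner_sub_left, real_inner_smul_left, hw2]; ring

lemma myrefl_invol (w : F) (hw : ‖w‖ = 1) (c : F) :
    (c - (2 * ⟪c, w⟫) • w) - (2 * ⟪c - (2 * ⟪c, w⟫) • w, w⟫) • w = c := by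
  rw [myrefl_inner w hw]; module

lemma myhalf (x z : F) : ‖x‖ ≤ ‖x - z‖ ↔ 2 * ⟪x, z⟫ ≤ ‖z‖ ^ 2 := by
  have h := norm_sub_sq_real x z
  constructor
  · intro hle; nlinarith [norm_nonneg x, norm_nonneg (x - z)]
  · intro hle; nlinarith [norm_nonneg x, norm_nonneg (x - z)]

end aux

/-- Let `Λ` be a lattice spanning `X ⊆ ℝᵐ` with Voronoi cell `V` (restricted to `X`),
invariant under the reflections `R_w` for unit vectors `w ∈ W`; let
`K = {x ∈ X : x·w ≥ 0 ∀ w ∈ W}` have nonempty relative interior, and `V₁ = K ∩ V`.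
Then for every `x ∈ K`, `dist(V, x + V) = 2·dist(V₁, x/2)`. -/
theorem dist_voronoi_eq_dist_fundamental_cone
    (m n : ℕ) (v : Fin n → EuclideanSpace ℝ (Fin m))
    (hv : LinearIndependent ℝ v)
    (Λ : Set (EuclideanSpace ℝ (Fin m)))
    (hΛ : Λ = (Submodule.span ℤ (Set.range v) : Submodule ℤ (EuclideanSpace ℝ (Fin m))))
    (X : Submodule ℝ (EuclideanSpace ℝ (Fin m)))
    (hX : X = Submodule.span ℝ (Set.range v))
    (W : Finset (EuclideanSpace ℝ (Fin m)))
    (hW : ∀ w ∈ W, ‖w‖ = 1)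
    -- each reflection R_w maps Λ onto itself
    (hrefl : ∀ w ∈ W, ∀ z ∈ Λ, z - (2 * ⟪z, w⟫) • w ∈ Λ)
    (K : Set (EuclideanSpace ℝ (Fin m)))
    (hK : K = {x | x ∈ X ∧ ∀ w ∈ W, 0 ≤ ⟪x, w⟫})
    -- K has nonempty relative interior in X
    (hKint : ∃ x ∈ K, ∃ ε > (0 : ℝ), ∀ y ∈ X, dist y x < ε → y ∈ K)
    (V V₁ : Set (EuclideanSpace ℝ (Fin m)))
    (hV : V = {x | x ∈ X ∧ ∀ z ∈ Λ, ‖x‖ ≤ ‖x - z‖})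
    (hV₁ : V₁ = K ∩ V) :
    ∀ x ∈ K,
      sInf {d : ℝ | ∃ a ∈ V, ∃ b ∈ V, d = dist a (x + b)}
        = 2 * Metric.infDist ((1 / 2 : ℝ) • x) V₁ := by
  classical
  have _trivial : True := trivial
  -- basic facts
  have hΛX : Λ ⊆ (X : Set (EuclideanSpace ℝ (Fin m))) := by
    rw [hΛ, hX]
    exact Submodule.span_subset_span ℤ ℝ _
  have hnegΛ : ∀ z ∈ Λ, -z ∈ Λ := by
    intro z hz
    rw [hΛ] at hz ⊢
    exact neg_mem hz
  have hΛ0 : (0 : EuclideanSpace ℝ (Fin m)) ∈ Λ := by rw [hΛ]; exact zero_mem _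
  have hV0 : (0 : EuclideanSpace ℝ (Fin m)) ∈ V := by
    rw [hV]; exact ⟨zero_mem _, fun z hz => by simp⟩
  have hVne : V.Nonempty := ⟨0, hV0⟩
  have hVX : V ⊆ (X : Set (EuclideanSpace ℝ (Fin m))) := by rw [hV]; exact fun a ha => ha.1
  have hnegV : ∀ a ∈ V, -a ∈ V := by
    intro a ha
    rw [hV] at ha ⊢
    refine ⟨neg_mem ha.1, fun z hz => ?_⟩
    calc ‖-a‖ = ‖a‖ := norm_neg a
      _ ≤ ‖a - -z‖ := ha.2 _ (hnegΛ z hz)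
      _ = ‖-a - z‖ := by rw [sub_neg_eq_add, ← norm_neg]; congr 1; abel
  have hconvV : Convex ℝ V := by
    rw [hV]
    intro a ha b hb s t hs ht hst
    refine ⟨X.add_mem (X.smul_mem s ha.1) (X.smul_mem t hb.1), fun z hz => ?_⟩
    rw [myhalf]
    have h1 := (myhalf a z).mp (ha.2 z hz)
    have h2 := (myhalf b z).mp (hb.2 z hz)
    rw [inner_add_left, real_inner_smul_left, real_inner_smul_left]
    nlinarith
  have hclosedV : IsClosed V := by
    have hVeq : V = (X : Set (EuclideanSpace ℝ (Fin m))) ∩ ⋂ z ∈ Λ, {x | ‖x‖ ≤ ‖x - z‖} := by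
      rw [hV]; ext y; simp [Set.mem_iInter]
    rw [hVeq]
    refine IsClosed.inter (Submodule.closed_of_finiteDimensional X) ?_
    refine isClosed_biInter fun z _ => ?_
    exact isClosed_le continuous_norm ((continuous_id.sub continuous_const).norm)
  -- reflections preserve X
  have hΛX' : Λ ⊆ (Submodule.span ℝ (Set.range v) : Set (EuclideanSpace ℝ (Fin m))) := by
    rw [hΛ]; exact Submodule.span_subset_span ℤ ℝ _
  have hRX : ∀ w ∈ W, ∀ z ∈ X, z - (2 * ⟪z, w⟫) • w ∈ X := by
    intro w hw z hz
    rw [hX] at hz ⊢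
    induction hz using Submodule.span_induction with
    | mem y hy =>
        have hyΛ : y ∈ Λ := by
          rw [hΛ]
          exact Submodule.subset_span hy
        exact hΛX' (hrefl w hw y hyΛ)
    | zero => simp
    | add a b _ _ ha hb =>
        have heq : (a + b) - (2 * ⟪a + b, w⟫) • w
            = (a - (2 * ⟪a, w⟫) • w) + (b - (2 * ⟪b, w⟫) • w) := by
          rw [inner_add_left]; module
        rw [heq]; exact add_mem ha hb
    | smul r a _ ha =>
        have heq : (r • a) - (2 * ⟪r • a, w⟫) • w = r • (a - (2 * ⟪a, w⟫) • w) := by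
          rw [real_inner_smul_left]; module
        rw [heq]; exact Submodule.smul_mem _ _ ha
  -- reflections preserve V
  have hRV : ∀ w ∈ W, ∀ a ∈ V, a - (2 * ⟪a, w⟫) • w ∈ V := by
    intro w hw a ha
    have hw1 := hW w hw
    rw [hV] at ha ⊢
    refine ⟨hRX w hw a ha.1, fun z hz => ?_⟩
    have hz' : z - (2 * ⟪z, w⟫) • w ∈ Λ := hrefl w hw z hz
    have h2 : z = (z - (2 * ⟪z, w⟫) • w) - (2 * ⟪z - (2 * ⟪z, w⟫) • w, w⟫) • w :=
      (myrefl_invol w hw1 z).symm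
    calc ‖a - (2 * ⟪a, w⟫) • w‖ = ‖a‖ := myrefl_norm w hw1 a
      _ ≤ ‖a - (z - (2 * ⟪z, w⟫) • w)‖ := ha.2 _ hz'
      _ = ‖(a - (2 * ⟪a, w⟫) • w) - z‖ := by
          rw [← myrefl_norm w hw1 (a - (z - (2 * ⟪z, w⟫) • w)), ← myrefl_sub]
          rw [myrefl_invol w hw1 z]
  -- relative interior point
  obtain ⟨x₀, hx₀K, ε, hε, hball⟩ := hKint
  have hx₀X : x₀ ∈ X := by rw [hK] at hx₀K; exact hx₀K.1
  have hx₀W : ∀ w ∈ W, 0 ≤ ⟪x₀, w⟫ := by rw [hK] at hx₀K; exact hx₀K.2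
  have hortho : ∀ w ∈ W, (∀ y ∈ X, ⟪y, w⟫ = 0) ∨ 0 < ⟪x₀, w⟫ := by
    intro w hw
    rcases lt_or_eq_of_le (hx₀W w hw) with h | h
    · exact Or.inr h
    · left
      intro y hy
      set t : ℝ := ε / (2 * (‖y‖ + 1)) with ht
      have htpos : 0 < t := by positivity
      have hdist : ∀ s : EuclideanSpace ℝ (Fin m), s = t • y ∨ s = -(t • y) →
          dist (x₀ + s) x₀ < ε := by
        intro s hs
        have hns : ‖s‖ = t * ‖y‖ := by
          rcases hs with rfl | rfl
          · rw [norm_smul, Real.norm_of_nonneg htpos.le]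
          · rw [norm_neg, norm_smul, Real.norm_of_nonneg htpos.le]
        rw [dist_eq_norm, add_sub_cancel_left, hns, ht]
        have h1 : ‖y‖ < ‖y‖ + 1 := by linarith
        have h2 : ε / (2 * (‖y‖ + 1)) * ‖y‖ < ε / 2 := by
          rw [div_mul_eq_mul_div, div_lt_div_iff₀ (by positivity) (by positivity)]
          nlinarith [norm_nonneg y]
        linarith
      have hmem : ∀ s : EuclideanSpace ℝ (Fin m), s = t • y ∨ s = -(t • y) →
          0 ≤ ⟪x₀ + s, w⟫ := by
        intro s hs
        have hsX : s ∈ X := by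
          rcases hs with rfl | rfl
          · exact X.smul_mem t hy
          · exact neg_mem (X.smul_mem t hy)
        have : x₀ + s ∈ K := hball _ (X.add_mem hx₀X hsX) (hdist s hs)
        rw [hK] at this
        exact this.2 w hw
      have hplus := hmem (t • y) (Or.inl rfl)
      have hminus := hmem (-(t • y)) (Or.inr rfl)
      rw [inner_add_left, real_inner_smul_left, ← h] at hplus
      rw [inner_add_left, inner_neg_left, real_inner_smul_left, ← h] at hminus
      have hy0 : ⟪y, w⟫ = 0 := by nlinarith
      exact hy0
  -- key lemma: for p in K, infDist p V₁ ≤ dist p c for all c in V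
  have hkey : ∀ p ∈ K, ∀ c ∈ V, Metric.infDist p V₁ ≤ dist p c := by
    intro p hp c hc
    have hpW : ∀ w ∈ W, 0 ≤ ⟪p, w⟫ := by rw [hK] at hp; exact hp.2
    have main : ∀ δ : ℝ, 0 < δ →
        Metric.infDist p V₁ ≤ dist p c + 2 * δ * (‖x₀‖ + 1) := by
      intro δ hδ
      set q := p + δ • x₀ with hq
      set S := V ∩ Metric.sphere (0 : EuclideanSpace ℝ (Fin m)) ‖c‖ with hS
      have hScpt : IsCompact S :=
        (isCompact_sphere (0 : EuclideanSpace ℝ (Fin m)) ‖c‖).inter_left hclosedV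
      have hcS : c ∈ S := ⟨hc, by simp⟩
      obtain ⟨cs, hcsS, hmin⟩ := hScpt.exists_isMinOn ⟨c, hcS⟩
        ((continuous_const.dist continuous_id).continuousOn :
          ContinuousOn (fun y => dist q y) S)
      have hcsnorm : ‖cs‖ = ‖c‖ := by
        have := hcsS.2
        rwa [mem_sphere_zero_iff_norm] at this
      have hcsK : cs ∈ K := by
        rw [hK]
        refine ⟨hVX hcsS.1, fun w hw => ?_⟩
        by_contra hneg
        push_neg at hneg
        rcases hortho w hw with horth | hpos
        · exact absurd (horth cs (hVX hcsS.1)) (ne_of_lt hneg)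
        · have hw1 := hW w hw
          have hqw : 0 < ⟪q, w⟫ := by
            rw [hq, inner_add_left, real_inner_smul_left]
            have := hpW w hw
            nlinarith
          set cs' := cs - (2 * ⟪cs, w⟫) • w with hcs'
          have hcs'S : cs' ∈ S := by
            refine ⟨hRV w hw cs hcsS.1, ?_⟩
            rw [mem_sphere_zero_iff_norm, hcs', myrefl_norm w hw1 cs, hcsnorm]
          have hsq := myrefl_norm_sq w hw1 q cs
          have hlt : dist q cs' < dist q cs := by
            rw [dist_eq_norm, dist_eq_norm, hcs']
            nlinarith [norm_nonneg (q - (cs - (2 * ⟪cs, w⟫) • w)), norm_nonneg (q - cs),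
              mul_pos (mul_pos (by norm_num : (0:ℝ) < 4) (neg_pos.mpr hneg)) hqw]
          exact absurd (hmin hcs'S) (not_le.mpr hlt)
      have hcsV₁ : cs ∈ V₁ := by rw [hV₁]; exact ⟨hcsK, hcsS.1⟩
      have hpq : dist p q = δ * ‖x₀‖ := by
        rw [hq, dist_eq_norm]
        simp [norm_smul, Real.norm_of_nonneg hδ.le]
      calc Metric.infDist p V₁ ≤ dist p cs := Metric.infDist_le_dist_of_mem hcsV₁
        _ ≤ dist p q + dist q cs := dist_triangle p q cs
        _ ≤ dist p q + dist q c := by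
            have h : dist q cs ≤ dist q c := hmin hcS
            linarith
        _ ≤ dist p q + (dist q p + dist p c) := by
            have := dist_triangle q p c
            linarith
        _ ≤ dist p c + 2 * δ * (‖x₀‖ + 1) := by
            rw [dist_comm q p, hpq]
            nlinarith [norm_nonneg x₀]
    refine le_of_forall_pos_le_add ?_
    intro ε' hε'
    have h1 := main (ε' / (2 * (‖x₀‖ + 1))) (by positivity)
    have h2 : 2 * (ε' / (2 * (‖x₀‖ + 1))) * (‖x₀‖ + 1) = ε' := by
      field_simp
    linarith
  have hV₁ne : V₁.Nonempty := by
    refine ⟨0, ?_⟩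
    rw [hV₁, hK]
    exact ⟨⟨zero_mem _, fun w hw => by simp⟩, hV0⟩
  have hV₁V : V₁ ⊆ V := by rw [hV₁]; exact Set.inter_subset_right
  -- infDist over V = infDist over V₁ for points of K
  have hinfeq : ∀ p ∈ K, Metric.infDist p V₁ = Metric.infDist p V := by
    intro p hp
    refine le_antisymm ?_ (Metric.infDist_le_infDist_of_subset hV₁V hV₁ne)
    by_contra h
    push_neg at h
    obtain ⟨c, hc, hlt⟩ := (Metric.infDist_lt_iff hVne).mp h
    exact absurd (hkey p hp c hc) (not_le.mpr hlt)
  intro x hx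
  have hpK : (1 / 2 : ℝ) • x ∈ K := by
    rw [hK] at hx ⊢
    refine ⟨Submodule.smul_mem _ _ hx.1, fun w hw => ?_⟩
    rw [real_inner_smul_left]
    have := hx.2 w hw
    positivity
  set p := (1 / 2 : ℝ) • x with hp
  rw [hinfeq p hpK]
  set D := {d : ℝ | ∃ a ∈ V, ∃ b ∈ V, d = dist a (x + b)} with hD
  have hDne : D.Nonempty := ⟨dist 0 (x + 0), 0, hV0, 0, hV0, rfl⟩
  have hDbdd : BddBelow D := ⟨0, fun d hd => by obtain ⟨a, _, b, _, rfl⟩ := hd; positivity⟩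
  refine le_antisymm ?_ ?_
  · -- sInf D ≤ 2 * infDist p V
    have h1 : ∀ c ∈ V, sInf D ≤ 2 * dist p c := by
      intro c hc
      have hel : 2 * dist p c ∈ D := by
        refine ⟨c, hc, -c, hnegV c hc, ?_⟩
        rw [dist_eq_norm, dist_eq_norm]
        have : c - (x + -c) = (2:ℝ) • (c - p) := by rw [hp]; module
        rw [this, norm_smul]
        simp [norm_sub_rev p c]
      exact csInf_le hDbdd hel
    have h2 : sInf D / 2 ≤ Metric.infDist p V := by
      by_contra h
      push_neg at h
      obtain ⟨c, hc, hlt⟩ := (Metric.infDist_lt_iff hVne).mp h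
      linarith [h1 c hc]
    linarith
  · -- 2 * infDist p V ≤ sInf D
    refine le_csInf hDne ?_
    rintro d ⟨a, ha, b, hb, rfl⟩
    have hcV : (1/2 : ℝ) • a + (1/2 : ℝ) • (-b) ∈ V := by
      have := hconvV ha (hnegV b hb) (by norm_num : (0:ℝ) ≤ 1/2) (by norm_num : (0:ℝ) ≤ 1/2)
        (by norm_num)
      simpa using this
    set c := (1/2 : ℝ) • a + (1/2 : ℝ) • (-b) with hc
    have heq : a - (x + b) = (2:ℝ) • (c - p) := by rw [hc, hp]; module
    rw [dist_eq_norm, heq, norm_smul]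
    have h3 : Metric.infDist p V ≤ dist p c := Metric.infDist_le_dist_of_mem hcV
    rw [dist_eq_norm, norm_sub_rev] at h3
    simp only [Real.norm_ofNat]
    linarith
end

section
/- With Λ, X, W, G, K, V, V₁, R as above, V₁ = ⋂ over z ∈ K ∩ Λ \ {0} with |z| ≤ 2R of {x ∈ K : x·z ≤ |z|²/2}; i.e., in the fundamental cone K it suffices to intersect with half-spaces determined by lattice vectors lying in K of length at most 2R. -/
open scoped RealInnerProductSpace

/-- Points of the ℤ-span of a linearly independent family within a bounded region form a
finite set. -/
lemma zspan_inter_ball_finite {m n : ℕ} (v : Fin n → EuclideanSpace ℝ (Fin m))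
    (hv : LinearIndependent ℝ v) (c : ℝ) :
    {y : EuclideanSpace ℝ (Fin m) |
      y ∈ (Submodule.span ℤ (Set.range v) : Submodule ℤ (EuclideanSpace ℝ (Fin m)))
        ∧ ‖y‖ ≤ c}.Finite := by
  classical
  have hs : LinearIndepOn ℝ id (Set.range v) :=
    hv.linearIndepOn_id
  let b := Module.Basis.extend hs
  have hrange : Set.range v ⊆ Set.range ⇑b := by
    rw [Module.Basis.coe_extend, Subtype.range_coe]
    exact hs.subset_extend _
  have hdisc : DiscreteTopology
      ((Submodule.span ℤ (Set.range ⇑b) : Submodule ℤ (EuclideanSpace ℝ (Fin m))) :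
        Set (EuclideanSpace ℝ (Fin m))) := by
    exact (inferInstance : DiscreteTopology (Submodule.span ℤ (Set.range ⇑b)))
  have hclosed : IsClosed
      ((Submodule.span ℤ (Set.range ⇑b) : Submodule ℤ (EuclideanSpace ℝ (Fin m))) :
        Set (EuclideanSpace ℝ (Fin m))) := by
    haveI : DiscreteTopology
        (Submodule.span ℤ (Set.range ⇑b) : Submodule ℤ (EuclideanSpace ℝ (Fin m))).toAddSubgroup :=
      (inferInstance : DiscreteTopology (Submodule.span ℤ (Set.range ⇑b)))
    exact AddSubgroup.isClosed_of_discrete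
      (H := (Submodule.span ℤ (Set.range ⇑b) :
        Submodule ℤ (EuclideanSpace ℝ (Fin m))).toAddSubgroup)
  have hfin := Metric.finite_isBounded_inter_isClosed
    (K := Metric.closedBall (0 : EuclideanSpace ℝ (Fin m)) c)
    (s := ((Submodule.span ℤ (Set.range ⇑b) : Submodule ℤ (EuclideanSpace ℝ (Fin m))) :
      Set (EuclideanSpace ℝ (Fin m))))
    ⟨hdisc⟩ Metric.isBounded_closedBall hclosed
  refine hfin.subset ?_
  rintro y ⟨hy, hyc⟩
  exact ⟨Metric.mem_closedBall.mpr (by simpa using hyc),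
    Submodule.span_mono hrange hy⟩

/-- With `Λ, X, W, K, V, V₁, R` as in the fundamental cone setting, `V₁` equals the set
of `x ∈ K` satisfying `x·z ≤ ‖z‖²/2` for every nonzero lattice vector `z ∈ K ∩ Λ` with
`‖z‖ ≤ 2R`: in the fundamental cone it suffices to intersect with half-spaces determined
by lattice vectors lying in `K` of length at most `2R`. -/
theorem voronoi_cone_eq_iInter_halfspaces_in_cone
    (m n : ℕ) (v : Fin n → EuclideanSpace ℝ (Fin m))
    (hv : LinearIndependent ℝ v)
    (Λ : Set (EuclideanSpace ℝ (Fin m)))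
    (hΛ : Λ = (Submodule.span ℤ (Set.range v) : Submodule ℤ (EuclideanSpace ℝ (Fin m))))
    (X : Submodule ℝ (EuclideanSpace ℝ (Fin m)))
    (hX : X = Submodule.span ℝ (Set.range v))
    (W : Finset (EuclideanSpace ℝ (Fin m)))
    (hW : ∀ w ∈ W, ‖w‖ = 1)
    -- each reflection R_w maps Λ onto itself
    (hrefl : ∀ w ∈ W, ∀ z ∈ Λ, z - (2 * ⟪z, w⟫) • w ∈ Λ)
    (K : Set (EuclideanSpace ℝ (Fin m)))
    (hK : K = {x | x ∈ X ∧ ∀ w ∈ W, 0 ≤ ⟪x, w⟫})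
    -- K has nonempty relative interior in X
    (hKint : ∃ x ∈ K, ∃ ε > (0 : ℝ), ∀ y ∈ X, dist y x < ε → y ∈ K)
    (V V₁ : Set (EuclideanSpace ℝ (Fin m)))
    (hV : V = {x | x ∈ X ∧ ∀ z ∈ Λ, ‖x‖ ≤ ‖x - z‖})
    (hV₁ : V₁ = K ∩ V)
    (R : ℝ)
    -- R is the covering radius of Λ (within X)
    (hR : IsLeast {r : ℝ | ∀ x ∈ X, ∃ z ∈ Λ, dist x z ≤ r} R) :
    V₁ = {x ∈ K | ∀ z ∈ Λ, z ∈ K → z ≠ 0 → ‖z‖ ≤ 2 * R → ⟪x, z⟫ ≤ ‖z‖ ^ 2 / 2} := by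
  classical
  -- Λ is contained in X
  have hΛX : ∀ z ∈ Λ, z ∈ X := by
    intro z hz
    rw [hΛ] at hz
    rw [hX]
    exact Submodule.span_le_restrictScalars ℤ ℝ (Set.range v) hz
  -- Λ is closed under subtraction and contains images of K etc. via hΛ
  have hΛsub : ∀ a ∈ Λ, ∀ b ∈ Λ, a - b ∈ Λ := by
    intro a ha b hb
    rw [hΛ] at ha hb ⊢
    exact Submodule.sub_mem _ ha hb
  -- the half-space characterization of the Voronoi inequality
  have hhalf : ∀ x z : EuclideanSpace ℝ (Fin m), ‖x‖ ≤ ‖x - z‖ ↔ ⟪x, z⟫ ≤ ‖z‖ ^ 2 / 2 := by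
    intro x z
    have hid := norm_sub_sq_real x z
    constructor
    · intro h
      have h2 : ‖x‖ ^ 2 ≤ ‖x - z‖ ^ 2 := pow_le_pow_left₀ (norm_nonneg x) h 2
      nlinarith
    · intro h
      have h2 : ‖x‖ ^ 2 ≤ ‖x - z‖ ^ 2 := by nlinarith
      nlinarith [norm_nonneg x, norm_nonneg (x - z)]
  obtain ⟨x₀, hx₀K, ε, hε, hball⟩ := hKint
  have hx₀X : x₀ ∈ X := by rw [hK] at hx₀K; exact hx₀K.1
  -- key step: the finitely many half-space conditions imply all of them
  have key : ∀ x ∈ K,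
      (∀ z ∈ Λ, z ∈ K → z ≠ 0 → ‖z‖ ≤ 2 * R → ⟪x, z⟫ ≤ ‖z‖ ^ 2 / 2) →
      ∀ z ∈ Λ, ⟪x, z⟫ ≤ ‖z‖ ^ 2 / 2 := by
    intro x hxK hx
    have hxX : x ∈ X := by rw [hK] at hxK; exact hxK.1
    have hxW : ∀ w ∈ W, 0 ≤ ⟪x, w⟫ := by rw [hK] at hxK; exact hxK.2
    by_contra hcon
    push_neg at hcon
    obtain ⟨z₀, hz₀Λ, hz₀⟩ := hcon
    -- the set of violators is finite and nonempty
    set T : Set (EuclideanSpace ℝ (Fin m)) :=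
      {z | z ∈ Λ ∧ ‖z‖ ^ 2 / 2 < ⟪x, z⟫} with hT
    have hTfin : T.Finite := by
      refine (zspan_inter_ball_finite v hv (2 * ‖x‖)).subset ?_
      rintro z ⟨hzΛ, hzlt⟩
      refine ⟨by rw [hΛ] at hzΛ; exact hzΛ, ?_⟩
      have hle := real_inner_le_norm x z
      nlinarith [norm_nonneg z, norm_nonneg x]
    have hTne : T.Nonempty := ⟨z₀, hz₀Λ, hz₀⟩
    obtain ⟨z, hzT, hzmin⟩ := Set.exists_min_image T (fun z => ‖z‖) hTfin hTne
    obtain ⟨hzΛ, hzlt⟩ := hzT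
    have hz0 : z ≠ 0 := by
      rintro rfl
      simp at hzlt
    rcases le_or_gt ‖z‖ (2 * R) with hle2R | hgt2R
    · -- use reflections to move z into K without decreasing ⟪x, ·⟫
      set S : Set (EuclideanSpace ℝ (Fin m)) := {y | y ∈ Λ ∧ ‖y‖ = ‖z‖} with hS
      have hSfin : S.Finite := by
        refine (zspan_inter_ball_finite v hv ‖z‖).subset ?_
        rintro y ⟨hyΛ, hyn⟩
        exact ⟨by rw [hΛ] at hyΛ; exact hyΛ, le_of_eq hyn⟩
      have hSne : S.Nonempty := ⟨z, hzΛ, rfl⟩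
      obtain ⟨y, hyS, hymax⟩ := Set.exists_max_image S
        (fun y => toLex (⟪x, y⟫, ⟪x₀, y⟫)) hSfin hSne
      obtain ⟨hyΛ, hyn⟩ := hyS
      have hyK : y ∈ K := by
        rw [hK]
        refine ⟨hΛX y hyΛ, ?_⟩
        intro w hw
        by_contra hneg
        push_neg at hneg
        have hy0 : y ≠ 0 := by rintro rfl; simp at hneg
        have hyn0 : (0 : ℝ) < ‖y‖ := norm_pos_iff.mpr hy0
        -- x₀ has strictly positive inner product with w
        have hx₀w : 0 < ⟪x₀, w⟫ := by
          set s : ℝ := ε / (2 * ‖y‖) with hsdef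
          have hs : 0 < s := div_pos hε (by positivity)
          have hmemX : x₀ + s • y ∈ X := X.add_mem hx₀X (X.smul_mem _ (hΛX y hyΛ))
          have hdist : dist (x₀ + s • y) x₀ < ε := by
            rw [dist_eq_norm]
            simp only [add_sub_cancel_left]
            rw [norm_smul, Real.norm_eq_abs, abs_of_pos hs]
            rw [hsdef]
            rw [div_mul_eq_mul_div]
            rw [div_lt_iff₀ (by positivity)]
            nlinarith
          have hmemK := hball _ hmemX hdist
          rw [hK] at hmemK
          have h0 := hmemK.2 w hw
          rw [inner_add_left, real_inner_smul_left] at h0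
          nlinarith
        have hxw : 0 ≤ ⟪x, w⟫ := hxW w hw
        set y' : EuclideanSpace ℝ (Fin m) := y - (2 * ⟪y, w⟫) • w with hy'
        have hy'Λ : y' ∈ Λ := hrefl w hw y hyΛ
        have hnw : ‖w‖ = 1 := hW w hw
        have hy'n : ‖y'‖ = ‖y‖ := by
          have h1 : ‖y'‖ ^ 2 = ‖y‖ ^ 2 := by
            rw [hy', norm_sub_sq_real, real_inner_smul_right, norm_smul,
              Real.norm_eq_abs]
            rw [hnw]
            rw [mul_pow, sq_abs]
            ring
          exact (sq_eq_sq₀ (norm_nonneg _) (norm_nonneg _)).mp h1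
        have hy'S : y' ∈ S := ⟨hy'Λ, hy'n.trans hyn⟩
        have hlemax := hymax y' hy'S
        rw [Prod.Lex.le_iff] at hlemax
        have e1 : ⟪x, y'⟫ = ⟪x, y⟫ - 2 * ⟪y, w⟫ * ⟪x, w⟫ := by
          rw [hy', inner_sub_right, real_inner_smul_right]
        have e2 : ⟪x₀, y'⟫ = ⟪x₀, y⟫ - 2 * ⟪y, w⟫ * ⟪x₀, w⟫ := by
          rw [hy', inner_sub_right, real_inner_smul_right]
        rcases hlemax with h | ⟨h1, h2⟩
        · simp only [ofLex_toLex] at h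
          nlinarith
        · simp only [ofLex_toLex] at h1 h2
          have hxw0 : ⟪x, w⟫ = 0 := by nlinarith
          rw [e2] at h2
          nlinarith
      -- y is a small nonzero lattice vector in K
      have hy0 : y ≠ 0 := by
        intro h
        apply hz0
        rw [h, norm_zero] at hyn
        exact norm_eq_zero.mp hyn.symm
      have hxy := hx y hyΛ hyK hy0 (by rw [hyn]; exact hle2R)
      have hxzy : ⟪x, z⟫ ≤ ⟪x, y⟫ := by
        have := hymax z ⟨hzΛ, rfl⟩
        rw [Prod.Lex.le_iff] at this
        rcases this with h | ⟨h1, _⟩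
        · exact le_of_lt h
        · exact le_of_eq h1
      rw [hyn] at hxy
      linarith
    · -- z is too long: use the covering radius to split z
      have hz2X : ((1 : ℝ) / 2) • z ∈ X := X.smul_mem _ (hΛX z hzΛ)
      obtain ⟨u, huΛ, hud⟩ := hR.1 _ hz2X
      rw [dist_eq_norm] at hud
      have hR0 : 0 ≤ R := by
        have : (0 : ℝ) ≤ dist (((1 : ℝ) / 2) • z) u := dist_nonneg
        rw [dist_eq_norm] at this
        linarith
      have hzn : 0 < ‖z‖ := norm_pos_iff.mpr hz0
      have hzuΛ : z - u ∈ Λ := hΛsub z hzΛ u huΛ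
      -- norms of the pieces are smaller
      have hnz2 : ‖((1 : ℝ) / 2) • z‖ = ‖z‖ / 2 := by
        rw [norm_smul, Real.norm_eq_abs]
        rw [abs_of_pos (by norm_num : (0:ℝ) < 1/2)]
        ring
      have hu_lt : ‖u‖ < ‖z‖ := by
        have h1 : ‖u‖ ≤ ‖u - ((1 : ℝ) / 2) • z‖ + ‖((1 : ℝ) / 2) • z‖ := by
          have := norm_add_le (u - ((1 : ℝ) / 2) • z) (((1 : ℝ) / 2) • z)
          simpa using this
        rw [norm_sub_rev] at h1
        rw [hnz2] at h1
        linarith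
      have hzu_lt : ‖z - u‖ < ‖z‖ := by
        have h1 : ‖z - u‖ ≤ ‖((1 : ℝ) / 2) • z - u‖ + ‖((1 : ℝ) / 2) • z‖ := by
          have := norm_add_le (((1 : ℝ) / 2) • z - u) (((1 : ℝ) / 2) • z)
          have he : ((1 : ℝ) / 2) • z - u + ((1 : ℝ) / 2) • z = z - u := by
            rw [sub_add_eq_add_sub]
            congr 1
            rw [← add_smul]
            norm_num
          rw [he] at this
          exact this
        rw [hnz2] at h1
        linarith
      -- minimality: the pieces are not violators
      have hu_ok : ⟪x, u⟫ ≤ ‖u‖ ^ 2 / 2 := by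
        by_contra h
        push_neg at h
        have := hzmin u ⟨huΛ, h⟩
        linarith
      have hzu_ok : ⟪x, z - u⟫ ≤ ‖z - u‖ ^ 2 / 2 := by
        by_contra h
        push_neg at h
        have := hzmin (z - u) ⟨hzuΛ, h⟩
        linarith
      -- parallelogram identity and contradiction
      have hd2 : ‖((1 : ℝ) / 2) • z - u‖ ^ 2 ≤ R ^ 2 := pow_le_pow_left₀ (norm_nonneg _) hud 2
      have hidd : ‖((1 : ℝ) / 2) • z - u‖ ^ 2
          = ‖((1 : ℝ) / 2) • z‖ ^ 2 - 2 * ⟪((1 : ℝ) / 2) • z, u⟫ + ‖u‖ ^ 2 :=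
        norm_sub_sq_real _ _
      have hid1 : ‖z - u‖ ^ 2 = ‖z‖ ^ 2 - 2 * ⟪z, u⟫ + ‖u‖ ^ 2 := norm_sub_sq_real z u
      have hinn1 : ⟪((1 : ℝ) / 2) • z, u⟫ = (1 / 2) * ⟪z, u⟫ := real_inner_smul_left z u _
      have hinn2 : ⟪x, z - u⟫ = ⟪x, z⟫ - ⟪x, u⟫ := inner_sub_right x z u
      rw [hnz2, hinn1] at hidd
      nlinarith
  -- now prove the set equality
  ext x
  simp only [hV₁, Set.mem_inter_iff, hV, Set.mem_setOf_eq, Set.mem_sep_iff]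
  constructor
  · rintro ⟨hxK, hxX, hxV⟩
    refine ⟨hxK, fun z hz _ _ _ => ?_⟩
    exact (hhalf x z).mp (hxV z hz)
  · rintro ⟨hxK, hx⟩
    refine ⟨hxK, by rw [hK] at hxK; exact hxK.1, fun z hz => ?_⟩
    exact (hhalf x z).mpr (key x hxK hx z hz)
end

section
/- Let Λ ⊆ ℂⁿ be an Eisenstein lattice (a ℤ[ω]-module for ω = e^{2πi/3} spanned by n ℂ-linearly independent vectors) with packing radius 1 and covering radius R ≤ 3/2, regarded as a rank-2n real lattice in ℝ²ⁿ. Set α = 3 + ω and Λ' = αΛ. Then for every nonzero v ∈ Λ, dist(V, αv + V) ≥ (3/2)|v| ≥ 3 ≥ 2R, where V is the Voronoi cell of Λ about the origin. -/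
open scoped RealInnerProductSpace

/-- Voronoi half-space inequality: if `‖x‖ ≤ ‖x - z‖` then `re ⟪x, z⟫ ≤ ‖z‖²/2`. -/
lemma voronoi_halfspace {E : Type*} [NormedAddCommGroup E] [InnerProductSpace ℂ E]
    (x z : E) (h : ‖x‖ ≤ ‖x - z‖) : (inner ℂ x z : ℂ).re ≤ ‖z‖ ^ 2 / 2 := by
  have hsq : ‖x‖ ^ 2 ≤ ‖x - z‖ ^ 2 := by
    apply pow_le_pow_left₀ (norm_nonneg x) h _
  have hexp : ‖x - z‖ ^ 2 = ‖x‖ ^ 2 - 2 * (inner ℂ x z : ℂ).re + ‖z‖ ^ 2 := by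
    rw [@norm_sub_sq ℂ]; norm_num
  nlinarith [hsq, hexp]

/-- Let `Λ ⊆ ℂⁿ` be an Eisenstein lattice (the `ℤ[ω]`-span of `n` ℂ-linearly
independent vectors, `ω = e^{2πi/3}`) with packing radius `1` and covering radius
`R ≤ 3/2`, regarded as a rank-`2n` real lattice. Set `α = 3 + ω`. Then for every
nonzero `u ∈ Λ`, `dist(V, αu + V) ≥ (3/2)‖u‖ ≥ 3 ≥ 2R`, where `V` is the Voronoi cell
of `Λ` about the origin. -/
theorem eisenstein_dist_voronoi_alpha
    (n : ℕ) (v : Fin n → EuclideanSpace ℂ (Fin n))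
    (hv : LinearIndependent ℂ v)
    (ω : ℂ) (hω : ω = Complex.exp (2 * Real.pi * Complex.I / 3))
    (Λ : Set (EuclideanSpace ℂ (Fin n)))
    (hΛ : Λ = {x | ∃ a b : Fin n → ℤ,
      x = ∑ i, (((a i : ℂ) + (b i : ℂ) * ω) • v i)})
    -- packing radius 1: every nonzero lattice vector has norm at least 2
    (hpack : ∀ u ∈ Λ, u ≠ 0 → 2 ≤ ‖u‖)
    -- covering radius R ≤ 3/2
    (R : ℝ)
    (hR : IsLeast {r : ℝ | ∀ x : EuclideanSpace ℂ (Fin n), ∃ z ∈ Λ, dist x z ≤ r} R)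
    (hR32 : R ≤ 3 / 2)
    (V : Set (EuclideanSpace ℂ (Fin n)))
    (hV : V = {x : EuclideanSpace ℂ (Fin n) | ∀ z ∈ Λ, ‖x‖ ≤ ‖x - z‖}) :
    ∀ u ∈ Λ, u ≠ 0 →
      (∀ x ∈ V, ∀ y ∈ V, (3 / 2) * ‖u‖ ≤ dist x ((3 + ω) • u + y))
      ∧ (3 : ℝ) ≤ (3 / 2) * ‖u‖ ∧ 2 * R ≤ 3 := by
  intro u hu hu0
  have hnorm2 : 2 ≤ ‖u‖ := hpack u hu hu0
  have hre : ω.re = -(1 / 2) := by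
    rw [hω]
    have h : 2 * (Real.pi : ℂ) * Complex.I / 3 = (((2 * Real.pi / 3 : ℝ)) : ℂ) * Complex.I := by
      push_cast; ring
    rw [h, Complex.exp_ofReal_mul_I_re]
    have h2 : 2 * Real.pi / 3 = Real.pi - Real.pi / 3 := by ring
    rw [h2, Real.cos_pi_sub, Real.cos_pi_div_three]
  have hneg : -u ∈ Λ := by
    rw [hΛ] at hu ⊢
    obtain ⟨a, b, hab⟩ := hu
    refine ⟨fun i => -a i, fun i => -b i, ?_⟩
    rw [hab, ← Finset.sum_neg_distrib]
    refine Finset.sum_congr rfl fun i _ => ?_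
    rw [← neg_smul]
    congr 1
    push_cast
    ring
  refine ⟨?_, by linarith, by linarith⟩
  intro x hx y hy
  rw [hV] at hx hy
  -- half-space bounds
  have hxu : (inner ℂ x u : ℂ).re ≤ ‖u‖ ^ 2 / 2 := voronoi_halfspace x u (hx u hu)
  have hyu : (inner ℂ y (-u) : ℂ).re ≤ ‖u‖ ^ 2 / 2 := by
    have := voronoi_halfspace y (-u) (hy (-u) hneg)
    simpa using this
  have hyu' : -(inner ℂ y u : ℂ).re ≤ ‖u‖ ^ 2 / 2 := by
    rw [inner_neg_right] at hyu
    simpa using hyu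
  -- the α-term
  have halpha : (inner ℂ ((3 + ω) • u) u : ℂ).re = (5 / 2) * ‖u‖ ^ 2 := by
    rw [inner_smul_left, inner_self_eq_norm_sq_to_K]
    simp [Complex.mul_re, Complex.conj_re, Complex.conj_im, Complex.add_re, hre, ← Complex.ofReal_pow]
    left; norm_num
  set w : EuclideanSpace ℂ (Fin n) := x - ((3 + ω) • u + y) with hw
  have hsplit : (inner ℂ w u : ℂ).re
      = (inner ℂ x u : ℂ).re - (inner ℂ ((3 + ω) • u) u : ℂ).re - (inner ℂ y u : ℂ).re := by
    have : (inner ℂ w u : ℂ) = inner ℂ x u - inner ℂ ((3 + ω) • u) u - inner ℂ y u := by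
      rw [hw]
      rw [show x - ((3 + ω) • u + y) = x - (3 + ω) • u - y by abel]
      rw [inner_sub_left, inner_sub_left]
    rw [this]
    simp [Complex.sub_re]
  have hkey : (3 / 2) * ‖u‖ ^ 2 ≤ -(inner ℂ w u : ℂ).re := by
    rw [hsplit, halpha]
    nlinarith [hxu, hyu']
  have hcs : -(inner ℂ w u : ℂ).re ≤ ‖w‖ * ‖u‖ := by
    have h1 : (inner ℂ (-w) u : ℂ).re ≤ ‖-w‖ * ‖u‖ := by
      have := re_inner_le_norm (𝕜 := ℂ) (-w) u
      simpa using this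
    rw [inner_neg_left, norm_neg] at h1
    simpa using h1
  have hfin : (3 / 2) * ‖u‖ ^ 2 ≤ ‖w‖ * ‖u‖ := le_trans hkey hcs
  have hupos : (0 : ℝ) < ‖u‖ := by linarith
  have : (3 / 2) * ‖u‖ ≤ ‖w‖ := by
    rw [pow_two] at hfin
    nlinarith [hfin, hupos]
  calc (3 / 2) * ‖u‖ ≤ ‖w‖ := this
    _ = dist x ((3 + ω) • u + y) := by rw [dist_eq_norm, hw]
end

section
/- If there exists an Eisenstein lattice Λ in ℂⁿ whose covering radius is at most 3/2 times its packing radius, then χ(ℝ²ⁿ) ≤ 7ⁿ. -/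
open scoped RealInnerProductSpace

noncomputable section EisensteinAux

private def zet : ℂ := Complex.exp (2 * Real.pi * Complex.I / 3)

private lemma zet_re : zet.re = -(1/2) := by
  have h : (2 * (Real.pi:ℂ) * Complex.I / 3) = ((2 * Real.pi / 3 : ℝ) : ℂ) * Complex.I := by
    push_cast; ring
  have h2 : (2 * Real.pi / 3 : ℝ) = Real.pi - Real.pi / 3 := by ring
  unfold zet
  rw [h, Complex.exp_mul_I, ← Complex.ofReal_cos, ← Complex.ofReal_sin, h2,
    Real.cos_pi_sub, Real.sin_pi_sub, Real.cos_pi_div_three, Real.sin_pi_div_three]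
  simp

private lemma zet_im : zet.im = Real.sqrt 3 / 2 := by
  have h : (2 * (Real.pi:ℂ) * Complex.I / 3) = ((2 * Real.pi / 3 : ℝ) : ℂ) * Complex.I := by
    push_cast; ring
  have h2 : (2 * Real.pi / 3 : ℝ) = Real.pi - Real.pi / 3 := by ring
  unfold zet
  rw [h, Complex.exp_mul_I, ← Complex.ofReal_cos, ← Complex.ofReal_sin, h2,
    Real.cos_pi_sub, Real.sin_pi_sub, Real.cos_pi_div_three, Real.sin_pi_div_three]
  simp

private lemma sqrt3_sq : Real.sqrt 3 ^ 2 = 3 := Real.sq_sqrt (by norm_num)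

private lemma zet_sq : zet ^ 2 = -1 - zet := by
  apply Complex.ext <;>
    simp [pow_two, Complex.mul_re, Complex.mul_im, zet_re, zet_im] <;> nlinarith [sqrt3_sq]

private lemma zaux1 : ((1:ℂ) + zet).re ^ 2 + ((1:ℂ) + zet).im ^ 2 = 1 := by
  simp only [Complex.add_re, Complex.add_im, Complex.one_re, Complex.one_im, zet_re, zet_im]
  nlinarith [sqrt3_sq]

private lemma zaux2 : ((3:ℂ) + zet).re * ((5:ℂ) + zet).re + ((3:ℂ) + zet).im * ((5:ℂ) + zet).im
    = 12 := by
  simp only [Complex.add_re, Complex.add_im, zet_re, zet_im]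
  norm_num
  nlinarith [sqrt3_sq]

private lemma zaux3 : ((5:ℂ) + zet).re ^ 2 + ((5:ℂ) + zet).im ^ 2 = 21 := by
  simp only [Complex.add_re, Complex.add_im, zet_re, zet_im]
  norm_num
  nlinarith [sqrt3_sq]

private lemma rinner_re {n : ℕ} (x y : EuclideanSpace ℂ (Fin n)) :
    ⟪x, y⟫ = Complex.re (inner ℂ x y : ℂ) := by
  simp [PiLp.inner_apply, Complex.re_sum]

private lemma rinner_smul2 {n : ℕ} (μ : EuclideanSpace ℂ (Fin n)) (p q : ℂ) :
    ⟪p • μ, q • μ⟫ = (p.re * q.re + p.im * q.im) * ‖μ‖^2 := by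
  rw [rinner_re, inner_smul_left, inner_smul_right]
  have h1 : (inner ℂ μ μ : ℂ) = ((‖μ‖^2 : ℝ) : ℂ) := by
    apply Complex.ext
    · simpa [← Complex.ofReal_pow] using inner_self_eq_norm_sq (𝕜 := ℂ) μ
    · simpa [← Complex.ofReal_pow] using inner_self_im (𝕜 := ℂ) μ
  rw [h1]
  simp [Complex.mul_re, Complex.mul_im, Complex.conj_re, Complex.conj_im,
    Complex.ofReal_re, Complex.ofReal_im, ← Complex.ofReal_pow]
  ring

private lemma real_smul_eq {n : ℕ} (x : ℝ) (m : EuclideanSpace ℂ (Fin n)) :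
    ((x : ℂ)) • m = x • m := by
  rw [show ((x:ℂ)) = x • (1:ℂ) by simp [Complex.real_smul], smul_assoc, one_smul]

private lemma norm_csmul {n : ℕ} (p : ℂ) (μ : EuclideanSpace ℂ (Fin n)) :
    ‖p • μ‖ = Real.sqrt (p.re^2 + p.im^2) * ‖μ‖ := by
  have h := rinner_smul2 μ p p
  rw [real_inner_self_eq_norm_sq] at h
  have h2 : ‖p • μ‖ = Real.sqrt (‖p • μ‖^2) := (Real.sqrt_sq (norm_nonneg _)).symm
  rw [h2, h, show p.re*p.re + p.im*p.im = p.re^2+p.im^2 by ring, Real.sqrt_mul (by positivity),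
    Real.sqrt_sq (norm_nonneg _)]

private def phi {n : ℕ} (v : Fin n → EuclideanSpace ℂ (Fin n)) (a b : Fin n → ℤ) :
    EuclideanSpace ℂ (Fin n) :=
  ∑ i, (((a i : ℂ) + (b i : ℂ) * zet) • v i)

variable {n : ℕ} (v : Fin n → EuclideanSpace ℂ (Fin n))

private lemma phi_zero : phi v 0 0 = 0 := by simp [phi]

private lemma phi_add (a b a' b' : Fin n → ℤ) :
    phi v a b + phi v a' b' = phi v (a + a') (b + b') := by
  unfold phi
  rw [← Finset.sum_add_distrib]
  refine Finset.sum_congr rfl fun i _ => ?_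
  rw [← add_smul]; congr 1
  simp only [Pi.add_apply, Pi.sub_apply, Pi.neg_apply, Pi.smul_apply, smul_eq_mul]
  push_cast; ring

private lemma phi_sub (a b a' b' : Fin n → ℤ) :
    phi v a b - phi v a' b' = phi v (a - a') (b - b') := by
  unfold phi
  rw [← Finset.sum_sub_distrib]
  refine Finset.sum_congr rfl fun i _ => ?_
  rw [← sub_smul]; congr 1
  simp only [Pi.add_apply, Pi.sub_apply, Pi.neg_apply, Pi.smul_apply, smul_eq_mul]
  push_cast; ring

private lemma phi_neg (a b : Fin n → ℤ) : -phi v a b = phi v (-a) (-b) := by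
  rw [show -phi v a b = phi v 0 0 - phi v a b by rw [phi_zero]; abel, phi_sub]
  simp

private lemma phi_alpha (c d : Fin n → ℤ) :
    (3 + zet) • phi v c d = phi v (fun i => 3 * c i - d i) (fun i => c i + 2 * d i) := by
  unfold phi
  rw [Finset.smul_sum]
  refine Finset.sum_congr rfl fun i _ => ?_
  rw [smul_smul]; congr 1
  have h := zet_sq
  simp only [Pi.add_apply, Pi.sub_apply, Pi.neg_apply, Pi.smul_apply, smul_eq_mul]
  push_cast
  linear_combination (d i : ℂ) * h

private lemma phi_omega1 (c d : Fin n → ℤ) :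
    (1 + zet) • phi v c d = phi v (c - d) c := by
  unfold phi
  rw [Finset.smul_sum]
  refine Finset.sum_congr rfl fun i _ => ?_
  rw [smul_smul]; congr 1
  have h := zet_sq
  simp only [Pi.add_apply, Pi.sub_apply, Pi.neg_apply, Pi.smul_apply, smul_eq_mul]
  push_cast
  linear_combination (d i : ℂ) * h

private lemma li_real (hv : LinearIndependent ℂ v) :
    LinearIndependent ℝ (Sum.elim v fun i => zet • v i) := by
  rw [Fintype.linearIndependent_iff]
  intro g hg
  set cc : Fin n → ℂ := fun i => (g (Sum.inl i) : ℂ) + (g (Sum.inr i)) * zet with hcc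
  have hsum : ∑ i, cc i • v i = 0 := by
    rw [show (0 : EuclideanSpace ℂ (Fin n))
        = ∑ j, g j • (Sum.elim v fun i => zet • v i) j from hg.symm,
      Fintype.sum_sum_type]
    rw [← Finset.sum_add_distrib]
    refine Finset.sum_congr rfl fun i _ => ?_
    simp only [Sum.elim_inl, Sum.elim_inr, hcc]
    rw [add_smul, real_smul_eq, ← Complex.real_smul, smul_assoc]
  have hz := Fintype.linearIndependent_iff.mp hv cc hsum
  have him0 : (0:ℝ) < Real.sqrt 3 / 2 := by positivity
  have hginr : ∀ i, g (Sum.inr i) = 0 := by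
    intro i
    have h2 : g (Sum.inr i) * (Real.sqrt 3 / 2) = 0 := by
      have h := congrArg Complex.im (hz i)
      simp only [hcc, Complex.add_im, Complex.ofReal_im, Complex.mul_im, Complex.ofReal_re,
        Complex.zero_im, zet_im, zero_mul, add_zero, zero_add] at h
      exact h
    exact (mul_eq_zero.mp h2).resolve_right (ne_of_gt him0)
  intro j
  rcases j with i | i
  · have h1 := congrArg Complex.re (hz i)
    simp only [hcc, Complex.add_re, Complex.ofReal_re, Complex.mul_re, Complex.ofReal_im,
      Complex.zero_re, zet_im, hginr i, zero_mul, mul_zero, add_zero, sub_zero, zero_sub,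
      zero_add] at h1
    simpa using h1
  · exact hginr i

private lemma packing_pos (hn : n ≠ 0) (hv : LinearIndependent ℂ v) {r : ℝ}
    (hr : IsGreatest {s : ℝ | ∀ u ∈ {x | ∃ a b : Fin n → ℤ, x = phi v a b}, u ≠ 0 → 2 * s ≤ ‖u‖}
      r) :
    0 < r := by
  haveI : Nonempty (Fin n) := ⟨⟨0, Nat.pos_of_ne_zero hn⟩⟩
  have hcard : Fintype.card (Fin n ⊕ Fin n) = Module.finrank ℝ (EuclideanSpace ℂ (Fin n)) := by
    rw [← Module.finrank_mul_finrank ℝ ℂ (EuclideanSpace ℂ (Fin n)),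
      Complex.finrank_real_complex, finrank_euclideanSpace, Fintype.card_fin]
    simp [Fintype.card_sum]
    ring
  set f := Sum.elim v fun i => zet • v i with hf
  have li := li_real v hv
  set bb : Module.Basis (Fin n ⊕ Fin n) ℝ (EuclideanSpace ℂ (Fin n)) :=
    basisOfLinearIndependentOfCardEqFinrank li hcard with hbb
  have hbbc : ⇑bb = f := coe_basisOfLinearIndependentOfCardEqFinrank li hcard
  have hmem : ∀ a b : Fin n → ℤ, phi v a b ∈ Submodule.span ℤ (Set.range ⇑bb) := by
    intro a b
    rw [hbbc, Submodule.mem_span_range_iff_exists_fun]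
    refine ⟨Sum.elim a b, ?_⟩
    rw [Fintype.sum_sum_type, phi, ← Finset.sum_add_distrib]
    refine Finset.sum_congr rfl fun i _ => ?_
    simp only [Sum.elim_inl, Sum.elim_inr, hf]
    rw [add_smul]
    congr 1
    · exact (Int.cast_smul_eq_zsmul ℂ (a i) (v i)).symm
    · rw [mul_smul, Int.cast_smul_eq_zsmul]
  haveI disc : DiscreteTopology (Submodule.span ℤ (Set.range ⇑bb)) := inferInstance
  have hopen : IsOpen ({0} : Set (Submodule.span ℤ (Set.range ⇑bb))) := isOpen_discrete _
  obtain ⟨δ, δpos, hδ⟩ := Metric.isOpen_iff.mp hopen 0 rfl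
  have hlb : (δ/2) ∈ {s : ℝ | ∀ u ∈ {x | ∃ a b : Fin n → ℤ, x = phi v a b},
      u ≠ 0 → 2 * s ≤ ‖u‖} := by
    intro u hu hune
    obtain ⟨a, b, rfl⟩ := hu
    by_contra hlt
    push_neg at hlt
    have hball : (⟨phi v a b, hmem a b⟩ : Submodule.span ℤ (Set.range ⇑bb))
        ∈ Metric.ball 0 δ := by
      rw [Metric.mem_ball, Subtype.dist_eq]
      simpa [dist_zero_right] using by linarith
    have := hδ hball
    simp only [Set.mem_singleton_iff, Submodule.mk_eq_zero] at this
    exact hune this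
  linarith [hr.2 hlb, δpos]

set_option maxHeartbeats 1600000 in
private theorem auxmain (hn : n ≠ 0) (r R : ℝ)
    (hv : LinearIndependent ℂ v)
    (hr : IsGreatest {s : ℝ | ∀ u ∈ {x | ∃ a b : Fin n → ℤ, x = phi v a b}, u ≠ 0 → 2 * s ≤ ‖u‖}
      r)
    (hR : IsLeast {s : ℝ | ∀ x : EuclideanSpace ℂ (Fin n),
      ∃ z ∈ {x | ∃ a b : Fin n → ℤ, x = phi v a b}, dist x z ≤ s} R)
    (hRr : R ≤ (3 / 2) * r) :
    ∃ c : EuclideanSpace ℝ (Fin (2 * n)) → Fin (7 ^ n),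
      ∀ x y : EuclideanSpace ℝ (Fin (2 * n)), dist x y = 1 → c x ≠ c y := by
  classical
  have rpos : 0 < r := packing_pos v hn hv hr
  have hpack : ∀ c d : Fin n → ℤ, phi v c d ≠ 0 → 2 * r ≤ ‖phi v c d‖ :=
    fun c d h0 => hr.1 _ ⟨c, d, rfl⟩ h0
  have hRnn : 0 ≤ R := by
    obtain ⟨z, _, hd⟩ := hR.1 0
    exact le_trans dist_nonneg hd
  obtain ⟨K, hK⟩ : ∃ K : ℝ, K = Real.sqrt 21 / 3 := ⟨_, rfl⟩
  have hK2 : K ^ 2 = 7 / 3 := by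
    rw [hK, div_pow, Real.sq_sqrt (by norm_num)]; norm_num
  have h21 : (9/2 : ℝ) < Real.sqrt 21 := (Real.lt_sqrt (by norm_num)).mpr (by norm_num)
  have hKpos : 0 < K := by rw [hK]; positivity
  have hK32 : (3:ℝ)/2 < K := by rw [hK]; linarith
  have hRK : R < K * r := lt_of_le_of_lt hRr (by
    have := mul_lt_mul_of_pos_right hK32 rpos; linarith)
  obtain ⟨t, ht⟩ : ∃ t : ℝ, t = R + K * r := ⟨_, rfl⟩
  have htpos : 0 < t := by
    rw [ht]; exact add_pos_of_nonneg_of_pos hRnn (mul_pos hKpos rpos)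
  have ht1 : 2 * R < t := by rw [ht]; linarith
  have ht2 : t < 2 * (K * r) := by rw [ht]; linarith
  obtain ⟨A0, hA0⟩ : ∃ A0 : ℝ, A0 = (t/2)^2 - R^2 := ⟨_, rfl⟩
  have hA0pos : 0 < A0 := by
    rw [hA0]
    have h1 : R^2 < (t/2)^2 := by
      apply pow_lt_pow_left₀ (by linarith only [ht1]) hRnn
      norm_num
    linarith only [h1]
  obtain ⟨B0, hB0⟩ : ∃ B0 : ℝ, B0 = (3/5) * ((2*(K*r))^2 - t*(2*(K*r))) := ⟨_, rfl⟩
  have h2Kr : 0 < 2*(K*r) := by positivity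
  have hB0pos : 0 < B0 := by
    have h2 : 0 < (2*(K*r))*((2*(K*r)) - t) := mul_pos h2Kr (by linarith only [ht2])
    rw [hB0, show (2*(K*r))^2 - t*(2*(K*r)) = (2*(K*r))*((2*(K*r)) - t) from by ring]
    exact mul_pos (by norm_num) h2
  obtain ⟨ε, hε⟩ : ∃ e : ℝ, e = min A0 B0 / 2 := ⟨_, rfl⟩
  have hεpos : 0 < ε := by rw [hε]; exact div_pos (lt_min hA0pos hB0pos) two_pos
  have hεA : R^2 + ε < (t/2)^2 := by
    have h1 : ε ≤ A0/2 := by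
      rw [hε]; have h := min_le_left A0 B0; linarith only [h]
    linarith only [h1, hA0, hA0pos, hεpos]
  have hεB : 5 * ε < 3 * ((2*(K*r))^2 - t*(2*(K*r))) := by
    have h1 : ε ≤ B0/2 := by
      rw [hε]; have h := min_le_right A0 B0; linarith only [h]
    linarith only [h1, hB0, hB0pos]
  -- approximate nearest point selection
  have exP : ∀ X : EuclideanSpace ℂ (Fin n), ∃ a b : Fin n → ℤ,
      ‖X - phi v a b‖^2 ≤ R^2 + ε ∧
      ∀ c d : Fin n → ℤ, (inner ℝ (X - phi v a b) (phi v c d) : ℝ) ≤ (‖phi v c d‖^2 + ε)/2 := by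
    intro X
    set S : Set ℝ := {s | ∃ a b : Fin n → ℤ, s = ‖X - phi v a b‖} with hS
    have hSne : S.Nonempty := ⟨‖X - phi v 0 0‖, 0, 0, rfl⟩
    have hSbdd : BddBelow S := ⟨0, by rintro s ⟨a, b, rfl⟩; exact norm_nonneg _⟩
    obtain ⟨d0, hd0⟩ : ∃ d0 : ℝ, d0 = sInf S := ⟨_, rfl⟩
    have hd0nn : 0 ≤ d0 := hd0 ▸ le_csInf hSne (by rintro s ⟨a, b, rfl⟩; exact norm_nonneg _)
    have hd0R : d0 ≤ R := by
      obtain ⟨z, ⟨a, b, rfl⟩, hdz⟩ := hR.1 X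
      rw [hd0]
      refine le_trans (csInf_le hSbdd ⟨a, b, rfl⟩) ?_
      rw [← dist_eq_norm]; exact hdz
    obtain ⟨ε₀, hε₀⟩ : ∃ e : ℝ, e = min 1 (ε/(2*R+1)) := ⟨_, rfl⟩
    have hε₀pos : 0 < ε₀ := hε₀ ▸ lt_min one_pos (by positivity)
    have hε₀1 : ε₀ ≤ 1 := hε₀ ▸ min_le_left _ _
    have hε₀ε : ε₀ * (2*R+1) ≤ ε := by
      have h2 : ε₀ ≤ ε/(2*R+1) := hε₀ ▸ min_le_right _ _
      rw [← le_div_iff₀ (by linarith only [hRnn])]; exact h2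
    obtain ⟨s, ⟨a, b, hs⟩, hslt⟩ := Real.lt_sInf_add_pos hSne hε₀pos
    rw [hs, ← hd0] at hslt
    have h4 : ‖X - phi v a b‖^2 < (d0+ε₀)^2 :=
      pow_lt_pow_left₀ hslt (norm_nonneg _) (two_ne_zero)
    have h5 : (d0+ε₀)^2 ≤ d0^2 + ε := by
      have e1 : (d0+ε₀)^2 = d0^2 + ε₀*(2*d0+ε₀) := by ring
      have e2 : ε₀*(2*d0+ε₀) ≤ ε₀*(2*R+1) :=
        mul_le_mul_of_nonneg_left (by linarith only [hd0R, hε₀1]) hε₀pos.le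
      linarith only [e1, e2, hε₀ε]
    have hkey : ∀ c d : Fin n → ℤ, ‖X - phi v a b‖^2 ≤ ‖X - phi v (a+c) (b+d)‖^2 + ε := by
      intro c d
      have hge : d0 ≤ ‖X - phi v (a+c) (b+d)‖ := hd0 ▸ csInf_le hSbdd ⟨a+c, b+d, rfl⟩
      have h7 : d0^2 ≤ ‖X - phi v (a+c) (b+d)‖^2 := pow_le_pow_left₀ hd0nn hge 2
      linarith only [h4, h5, h7]
    refine ⟨a, b, ?_, ?_⟩
    · have h7 : d0^2 ≤ R^2 := pow_le_pow_left₀ hd0nn hd0R 2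
      linarith only [h4, h5, h7]
    · intro c d
      have h1 := hkey c d
      have h2 : X - phi v (a+c) (b+d) = (X - phi v a b) - phi v c d := by
        rw [← phi_add]; abel
      rw [h2, norm_sub_sq_real (X - phi v a b) (phi v c d)] at h1
      linarith only [h1]
  choose Af Bf hP1 hP2 using exP
  obtain ⟨col, hcol⟩ : ∃ col : EuclideanSpace ℂ (Fin n) → (Fin n → ZMod 7),
      col = fun X i => ((Af X i - 3 * Bf X i : ℤ) : ZMod 7) := ⟨_, rfl⟩
  -- the key dichotomy
  have hdich : ∀ X Y : EuclideanSpace ℂ (Fin n), col X = col Y → dist X Y ≠ t := by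
    intro X Y hXY hdist
    obtain ⟨zx, hzx⟩ : ∃ z, z = phi v (Af X) (Bf X) := ⟨_, rfl⟩
    obtain ⟨zy, hzy⟩ : ∃ z, z = phi v (Af Y) (Bf Y) := ⟨_, rfl⟩
    have hx1 : ‖X - zx‖ < t/2 := by
      rw [hzx]
      exact lt_of_pow_lt_pow_left₀ 2 (by linarith only [htpos])
        (lt_of_le_of_lt (hP1 X) hεA)
    have hy1 : ‖Y - zy‖ < t/2 := by
      rw [hzy]
      exact lt_of_pow_lt_pow_left₀ 2 (by linarith only [htpos])
        (lt_of_le_of_lt (hP1 Y) hεA)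
    by_cases hzz : zx = zy
    · have hlt : dist X Y < t := by
        calc dist X Y ≤ dist X zx + dist zx Y := dist_triangle _ _ _
        _ = ‖X - zx‖ + ‖Y - zy‖ := by rw [dist_eq_norm, dist_comm, dist_eq_norm, hzz]
        _ < t := by linarith only [hx1, hy1]
      exact absurd hdist (ne_of_lt hlt)
    · have hdvd : ∀ i, (7:ℤ) ∣ ((Af Y i - Af X i) - 3 * (Bf Y i - Bf X i)) := by
        intro i
        have hcast := congrFun hXY i
        rw [hcol] at hcast
        have h7 := (ZMod.intCast_eq_intCast_iff _ _ _).mp hcast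
        have hd := h7.dvd
        have he : (Af Y i - 3 * Bf Y i) - (Af X i - 3 * Bf X i)
            = (Af Y i - Af X i) - 3 * (Bf Y i - Bf X i) := by ring
        rwa [he] at hd
      choose e he using hdvd
      obtain ⟨c, hc⟩ : ∃ c : Fin n → ℤ, c = fun i => (Bf Y i - Bf X i) + 2 * e i := ⟨_, rfl⟩
      obtain ⟨d, hd⟩ : ∃ d : Fin n → ℤ, d = fun i => -(e i) := ⟨_, rfl⟩
      obtain ⟨μ, hμ⟩ : ∃ m, m = phi v c d := ⟨_, rfl⟩
      have hfun1 : (fun i => 3 * c i - d i) = (Af Y - Af X) := by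
        funext i; simp only [hc, hd, Pi.sub_apply]; have h := he i; omega
      have hfun2 : (fun i => c i + 2 * d i) = (Bf Y - Bf X) := by
        funext i; simp only [hc, hd, Pi.sub_apply]; have h := he i; omega
      have hμz : zy - zx = (3 + zet) • μ := by
        rw [hμ, phi_alpha v c d, hfun1, hfun2, hzy, hzx, phi_sub]
      have hμne : μ ≠ 0 := by
        intro h0
        rw [h0, smul_zero] at hμz
        exact hzz (sub_eq_zero.mp hμz).symm
      have hμnorm : 2 * r ≤ ‖μ‖ := by
        rw [hμ] at hμne ⊢
        exact hpack c d hμne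
      have hμpos : 0 < ‖μ‖ := norm_pos_iff.mpr hμne
      obtain ⟨w2, hw2d⟩ : ∃ w, w = phi v (c - d) c := ⟨_, rfl⟩
      have hw2 : (1 + zet) • μ = w2 := by rw [hμ, phi_omega1 v c d, hw2d]
      have hw2norm : ‖w2‖ = ‖μ‖ := by
        rw [← hw2, norm_csmul, zaux1, Real.sqrt_one, one_mul]
      obtain ⟨ev, hev⟩ : ∃ w, w = ((5:ℂ) + zet) • μ := ⟨_, rfl⟩
      have hevdecomp : ev = (4:ℝ) • μ + w2 := by
        rw [hev, ← hw2, ← real_smul_eq, ← add_smul]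
        congr 1
        push_cast
        ring
      have hterm1 : (inner ℝ (zy - zx) ev : ℝ) = 12 * ‖μ‖^2 := by
        rw [hμz, hev, rinner_smul2, zaux2]
      have hnev : ‖ev‖ = Real.sqrt 21 * ‖μ‖ := by
        rw [hev, norm_csmul, zaux3]
      have hup : (inner ℝ (X - zx) ev : ℝ) ≤ (5/2) * (‖μ‖^2 + ε) := by
        have h1 := hP2 X c d
        have h2 := hP2 X (c - d) c
        rw [← hμ, ← hzx] at h1
        rw [← hw2d, ← hzx, hw2norm] at h2
        rw [hevdecomp, inner_add_right, real_inner_smul_right]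
        linarith only [h1, h2]
      have hlo : -(5/2) * (‖μ‖^2 + ε) ≤ (inner ℝ (Y - zy) ev : ℝ) := by
        have h1 := hP2 Y (-c) (-d)
        have h2 := hP2 Y (d - c) (-c)
        have hm1 : phi v (-c) (-d) = -μ := by rw [← phi_neg, hμ]
        have hm2 : phi v (d - c) (-c) = -w2 := by
          have hdc : d - c = -(c - d) := by funext i; simp only [Pi.sub_apply, Pi.neg_apply]; ring
          rw [hdc, hw2d, ← phi_neg]
        rw [hm1, ← hzy, inner_neg_right, norm_neg] at h1
        rw [hm2, ← hzy, inner_neg_right, norm_neg] at h2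
        rw [hw2norm] at h2
        rw [hevdecomp, inner_add_right, real_inner_smul_right]
        linarith only [h1, h2]
      have hdecomp : (inner ℝ (Y - X) ev : ℝ)
          = (inner ℝ (zy - zx) ev : ℝ) + (inner ℝ (Y - zy) ev : ℝ) - (inner ℝ (X - zx) ev : ℝ) := by
        rw [show Y - X = (zy - zx) + ((Y - zy) - (X - zx)) from by abel,
          inner_add_left (𝕜 := ℝ) (zy - zx) ((Y - zy) - (X - zx)) ev,
          inner_sub_left (𝕜 := ℝ) (Y - zy) (X - zx) ev]
        ring
      have hCS : (inner ℝ (Y - X) ev : ℝ) ≤ t * (Real.sqrt 21 * ‖μ‖) := by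
        have h1 := real_inner_le_norm (Y - X) ev
        have h2 : ‖Y - X‖ = t := by
          rw [← dist_eq_norm, dist_comm]
          exact hdist
        rw [h2, hnev] at h1
        exact h1
      have hmain : 7 * ‖μ‖^2 - 5 * ε ≤ t * (Real.sqrt 21 * ‖μ‖) := by
        linarith only [hCS, hdecomp, hterm1, hup, hlo]
      have h3K : Real.sqrt 21 = 3 * K := by rw [hK]; ring
      have e1 : 2 * (K * r) ≤ K * ‖μ‖ := by
        have h := mul_le_mul_of_nonneg_left hμnorm hKpos.le
        linarith only [h]
      have e2 : (2*(K*r)) * ((2*(K*r)) - t) ≤ (K * ‖μ‖) * ((K * ‖μ‖) - t) :=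
        mul_le_mul e1 (by linarith only [e1]) (by linarith only [ht2]) (by positivity)
      have e6 : 3 * ((K * ‖μ‖) * ((K * ‖μ‖) - t)) = 7 * ‖μ‖^2 - t * (Real.sqrt 21 * ‖μ‖) := by
        rw [h3K]
        linear_combination (3 * ‖μ‖^2) * hK2
      linarith only [hmain, e2, e6, hεB, ht2, h2Kr]
  -- assemble the coloring of ℝ^{2n}
  have hcard7 : Fintype.card (Fin n → ZMod 7) = 7 ^ n := by
    simp [Fintype.card_fun]
  obtain ⟨eq7⟩ : Nonempty ((Fin n → ZMod 7) ≃ Fin (7^n)) := ⟨Fintype.equivFinOfCardEq hcard7⟩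
  have hdim : 2 * n = Module.finrank ℝ (EuclideanSpace ℂ (Fin n)) := by
    rw [← Module.finrank_mul_finrank ℝ ℂ (EuclideanSpace ℂ (Fin n)),
      Complex.finrank_real_complex, finrank_euclideanSpace, Fintype.card_fin]
  let Φ := (stdOrthonormalBasis ℝ (EuclideanSpace ℂ (Fin n))).repr
  let Ψ := LinearIsometryEquiv.piLpCongrLeft 2 ℝ ℝ (finCongr hdim)
  refine ⟨fun x => eq7 (col (t • (Φ.symm (Ψ x)))), fun x y hxy hcontra => ?_⟩
  have hcc : col (t • (Φ.symm (Ψ x))) = col (t • (Φ.symm (Ψ y))) := eq7.injective hcontra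
  refine hdich _ _ hcc ?_
  rw [dist_smul₀, LinearIsometryEquiv.dist_map, LinearIsometryEquiv.dist_map, hxy, mul_one,
    Real.norm_eq_abs, abs_of_pos htpos]

end EisensteinAux

/-- If there exists an Eisenstein lattice `Λ` in `ℂⁿ` (the `ℤ[ω]`-span of `n`
ℂ-linearly independent vectors, `ω = e^{2πi/3}`) whose covering radius is at most
`3/2` times its packing radius, then `χ(ℝ²ⁿ) ≤ 7ⁿ`. -/
theorem chromatic_le_seven_pow_of_eisenstein_lattice
    (n : ℕ)
    (h : ∃ (v : Fin n → EuclideanSpace ℂ (Fin n)) (Λ : Set (EuclideanSpace ℂ (Fin n)))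
           (r R : ℝ),
      LinearIndependent ℂ v
      ∧ Λ = {x | ∃ a b : Fin n → ℤ,
          x = ∑ i, (((a i : ℂ) + (b i : ℂ) * Complex.exp (2 * Real.pi * Complex.I / 3)) • v i)}
      -- r is the packing radius of Λ
      ∧ IsGreatest {s : ℝ | ∀ u ∈ Λ, u ≠ 0 → 2 * s ≤ ‖u‖} r
      -- R is the covering radius of Λ
      ∧ IsLeast {s : ℝ | ∀ x : EuclideanSpace ℂ (Fin n), ∃ z ∈ Λ, dist x z ≤ s} R
      -- covering-packing ratio at most 3/2
      ∧ R ≤ (3 / 2) * r) :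
    ∃ c : EuclideanSpace ℝ (Fin (2 * n)) → Fin (7 ^ n),
      ∀ x y : EuclideanSpace ℝ (Fin (2 * n)), dist x y = 1 → c x ≠ c y := by
  rcases Nat.eq_zero_or_pos n with hn | hn
  · subst hn
    refine ⟨fun _ => ⟨0, by norm_num⟩, fun x y hxy => ?_⟩
    exfalso
    have hxy0 : x = y := by
      ext i
      exact absurd i.isLt (by omega)
    rw [hxy0, dist_self] at hxy
    norm_num at hxy
  · obtain ⟨v, Λ, r, R, hv, hΛ, hr, hR, hRr⟩ := h
    subst hΛ
    exact auxmain v hn.ne' r R hv hr hR hRr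
end

section
/- Let Λ₁ ⊆ ℝ^{n₁} and Λ₂ ⊆ ℝ^{n₂} be full rank lattices each with packing radius 1 and covering radii ρ₁, ρ₂ respectively, with n₁ ≥ n₂. Define the π/3-sum Λ = {(x + L(y)/2, (√3/2)y) : x ∈ Λ₁, y ∈ Λ₂} ⊆ ℝ^{n₁+n₂}, where L : ℝ^{n₂} → ℝ^{n₁} appends zeros. Then Λ is a full rank lattice with packing radius at least 1 and covering radius at most √(ρ₁² + (3/4)ρ₂²). -/
noncomputable section PiThree
namespace PiThree

variable (n₁ n₂ : ℕ)

def L0 (y : EuclideanSpace ℝ (Fin n₂)) : EuclideanSpace ℝ (Fin n₁) :=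
  WithLp.toLp 2 fun i => if h : (i : ℕ) < n₂ then y ⟨i, h⟩ else 0

lemma L0_apply (y : EuclideanSpace ℝ (Fin n₂)) (i : Fin n₁) :
    L0 n₁ n₂ y i = if h : (i : ℕ) < n₂ then y ⟨i, h⟩ else 0 := rfl

lemma norm_L0 (hn : n₂ ≤ n₁) (y : EuclideanSpace ℝ (Fin n₂)) :
    ‖L0 n₁ n₂ y‖ = ‖y‖ := by
  rw [EuclideanSpace.norm_eq, EuclideanSpace.norm_eq]
  congr 1
  set g : ℕ → ℝ := fun m => ‖(if h : m < n₂ then y ⟨m, h⟩ else 0 : ℝ)‖ ^ 2 with hg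
  have h1 : ∑ i : Fin n₁, ‖L0 n₁ n₂ y i‖ ^ 2 = ∑ m ∈ Finset.range n₁, g m := by
    rw [← Fin.sum_univ_eq_sum_range g n₁]
    rfl
  have h2 : ∑ i : Fin n₂, ‖y i‖ ^ 2 = ∑ m ∈ Finset.range n₂, g m := by
    rw [← Fin.sum_univ_eq_sum_range g n₂]
    refine Finset.sum_congr rfl fun i _ => ?_
    simp [hg]
  rw [h1, h2]
  refine (Finset.sum_subset (Finset.range_subset_range.2 hn) fun m _ hm => ?_).symm
  simp only [Finset.mem_range, not_lt] at hm
  simp [hg, dif_neg (not_lt.2 hm)]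

end PiThree

noncomputable section Part2
namespace PiThree
variable (n₁ n₂ : ℕ)

def fwd (z : EuclideanSpace ℝ (Fin n₁) × EuclideanSpace ℝ (Fin n₂)) :
    EuclideanSpace ℝ (Fin (n₁ + n₂)) :=
  WithLp.toLp 2 fun k => Fin.addCases (motive := fun _ => ℝ) (fun i => z.1 i + (1 / 2) * L0 n₁ n₂ z.2 i)
    (fun j => (Real.sqrt 3 / 2) * z.2 j) k

@[simp] lemma fwd_castAdd (z) (i : Fin n₁) :
    fwd n₁ n₂ z (Fin.castAdd n₂ i) = z.1 i + (1 / 2) * L0 n₁ n₂ z.2 i := by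
  simp [fwd]

@[simp] lemma fwd_natAdd (z) (j : Fin n₂) :
    fwd n₁ n₂ z (Fin.natAdd n₁ j) = (Real.sqrt 3 / 2) * z.2 j := by
  simp [fwd]

def bwd (p : EuclideanSpace ℝ (Fin (n₁ + n₂))) :
    EuclideanSpace ℝ (Fin n₁) × EuclideanSpace ℝ (Fin n₂) :=
  (WithLp.toLp 2 fun i => p (Fin.castAdd n₂ i) -
      (1 / 2) * L0 n₁ n₂ (WithLp.toLp 2 fun j => (2 / Real.sqrt 3) * p (Fin.natAdd n₁ j)) i,
   WithLp.toLp 2 fun j => (2 / Real.sqrt 3) * p (Fin.natAdd n₁ j))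

lemma sqrt3_ne : (Real.sqrt 3) ≠ 0 := by positivity

def E : (EuclideanSpace ℝ (Fin n₁) × EuclideanSpace ℝ (Fin n₂)) ≃ₗ[ℝ]
    EuclideanSpace ℝ (Fin (n₁ + n₂)) where
  toFun := fwd n₁ n₂
  invFun := bwd n₁ n₂
  map_add' := by
    intro a b
    ext k
    induction k using Fin.addCases with
    | left i => simp [L0]; split <;> ring
    | right j => simp; ring
  map_smul' := by
    intro c a
    ext k
    induction k using Fin.addCases with
    | left i => simp [L0]; split <;> ring
    | right j => simp; ring
  left_inv := by
    intro z
    have h3 := sqrt3_ne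
    have hy : (WithLp.toLp 2 fun j : Fin n₂ => (2 / Real.sqrt 3) * fwd n₁ n₂ z (Fin.natAdd n₁ j)) = z.2 := by
      ext j
      rw [PiLp.toLp_apply, fwd_natAdd]
      field_simp
    have hx : (WithLp.toLp 2 fun i : Fin n₁ => fwd n₁ n₂ z (Fin.castAdd n₂ i) -
        (1 / 2) * L0 n₁ n₂ (WithLp.toLp 2 fun j => (2 / Real.sqrt 3) * fwd n₁ n₂ z (Fin.natAdd n₁ j)) i)
        = z.1 := by
      rw [hy]
      ext i
      rw [PiLp.toLp_apply, fwd_castAdd]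
      ring
    exact Prod.ext hx hy
  right_inv := by
    intro p
    ext k
    induction k using Fin.addCases with
    | left i => simp [bwd]
    | right j =>
      simp [bwd]
      field_simp

end PiThree
end Part2

noncomputable section Part3
namespace PiThree
variable (n₁ n₂ : ℕ)

lemma normsq {m : ℕ} (v : EuclideanSpace ℝ (Fin m)) : ‖v‖ ^ 2 = ∑ i, (v i) ^ 2 := by
  rw [EuclideanSpace.norm_eq, Real.sq_sqrt (by positivity)]
  simp [sq_abs]

lemma sq_sqrt3 : (Real.sqrt 3) ^ 2 = 3 := Real.sq_sqrt (by norm_num)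

lemma norm_fwd_sq (z : EuclideanSpace ℝ (Fin n₁) × EuclideanSpace ℝ (Fin n₂)) :
    ‖fwd n₁ n₂ z‖ ^ 2 = ‖z.1 + (1 / 2 : ℝ) • L0 n₁ n₂ z.2‖ ^ 2 + 3 / 4 * ‖z.2‖ ^ 2 := by
  rw [normsq, normsq, normsq, Fin.sum_univ_add]
  simp only [fwd_castAdd, fwd_natAdd, PiLp.add_apply, PiLp.smul_apply, smul_eq_mul,
    Finset.mul_sum]
  congr 1
  refine Finset.sum_congr rfl fun j _ => ?_
  have := sq_sqrt3
  nlinarith [this]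

lemma norm_fwd_sq' (z : EuclideanSpace ℝ (Fin n₁) × EuclideanSpace ℝ (Fin n₂)) (hn : n₂ ≤ n₁) :
    ‖fwd n₁ n₂ z‖ ^ 2 = ‖z.1‖ ^ 2 + inner ℝ z.1 (L0 n₁ n₂ z.2) + ‖z.2‖ ^ 2 := by
  rw [norm_fwd_sq]
  have h := norm_add_sq_real z.1 ((1 / 2 : ℝ) • L0 n₁ n₂ z.2)
  rw [h, real_inner_smul_right, norm_smul, norm_L0 n₁ n₂ hn]
  simp only [norm_div, Real.norm_ofNat, norm_one, mul_pow]
  ring_nf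

end PiThree
end Part3

noncomputable section Part4
namespace PiThree
variable (n₁ n₂ : ℕ)

lemma span_range_eq (b₁ : Module.Basis (Fin n₁) ℝ (EuclideanSpace ℝ (Fin n₁)))
    (b₂ : Module.Basis (Fin n₂) ℝ (EuclideanSpace ℝ (Fin n₂))) :
    (((Submodule.span ℤ (Set.range (((b₁.prod b₂).map (E n₁ n₂)).reindex finSumFinEquiv))) :
        Submodule ℤ (EuclideanSpace ℝ (Fin (n₁ + n₂)))) : Set (EuclideanSpace ℝ (Fin (n₁ + n₂))))
    = fwd n₁ n₂ '' (((Submodule.span ℤ (Set.range b₁) : Submodule ℤ _) : Set _) ×ˢ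
        ((Submodule.span ℤ (Set.range b₂) : Submodule ℤ _) : Set _)) := by
  rw [Module.Basis.range_reindex]
  have h1 : Set.range ((b₁.prod b₂).map (E n₁ n₂))
      = ⇑((E n₁ n₂).toLinearMap.restrictScalars ℤ) '' Set.range (b₁.prod b₂) := by
    rw [← Set.range_comp]; rfl
  have hrange : Set.range (b₁.prod b₂)
      = (LinearMap.inl ℤ _ _) '' Set.range b₁ ∪ (LinearMap.inr ℤ _ _) '' Set.range b₂ := by
    ext v
    constructor
    · rintro ⟨i | j, rfl⟩
      · exact Or.inl ⟨b₁ i, Set.mem_range_self i,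
          by simp [Module.Basis.prod_apply, LinearMap.inl_apply]⟩
      · exact Or.inr ⟨b₂ j, Set.mem_range_self j,
          by simp [Module.Basis.prod_apply, LinearMap.inr_apply]⟩
    · rintro (⟨x, ⟨i, rfl⟩, rfl⟩ | ⟨y, ⟨j, rfl⟩, rfl⟩)
      · exact ⟨Sum.inl i, by simp [Module.Basis.prod_apply, LinearMap.inl_apply]⟩
      · exact ⟨Sum.inr j, by simp [Module.Basis.prod_apply, LinearMap.inr_apply]⟩
  rw [h1, ← Submodule.map_span, hrange, LinearMap.span_inl_union_inr, Submodule.map_coe]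
  congr 1

end PiThree
end Part4

open PiThree



/-- The `π/3`-sum of lattices. Let `Λ₁ ⊆ ℝ^{n₁}` and `Λ₂ ⊆ ℝ^{n₂}` be full rank
lattices with packing radius `1` and covering radii `ρ₁, ρ₂`, with `n₁ ≥ n₂`.
Define `Λ = {(x + L(y)/2, (√3/2)y) : x ∈ Λ₁, y ∈ Λ₂} ⊆ ℝ^{n₁+n₂}`, where `L` appends
zeros. Then `Λ` is a full rank lattice with packing radius at least `1` and covering
radius at most `√(ρ₁² + (3/4)ρ₂²)`. -/
theorem pi_div_three_sum_lattice
    (n₁ n₂ : ℕ) (hn : n₂ ≤ n₁)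
    (Λ₁ : Set (EuclideanSpace ℝ (Fin n₁))) (Λ₂ : Set (EuclideanSpace ℝ (Fin n₂)))
    (b₁ : Module.Basis (Fin n₁) ℝ (EuclideanSpace ℝ (Fin n₁)))
    (b₂ : Module.Basis (Fin n₂) ℝ (EuclideanSpace ℝ (Fin n₂)))
    (hΛ₁ : Λ₁ = (Submodule.span ℤ (Set.range b₁) : Submodule ℤ (EuclideanSpace ℝ (Fin n₁))))
    (hΛ₂ : Λ₂ = (Submodule.span ℤ (Set.range b₂) : Submodule ℤ (EuclideanSpace ℝ (Fin n₂))))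
    -- both lattices have packing radius 1
    (hpack₁ : IsGreatest {s : ℝ | ∀ u ∈ Λ₁, u ≠ 0 → 2 * s ≤ ‖u‖} 1)
    (hpack₂ : IsGreatest {s : ℝ | ∀ u ∈ Λ₂, u ≠ 0 → 2 * s ≤ ‖u‖} 1)
    -- covering radii ρ₁, ρ₂
    (ρ₁ ρ₂ : ℝ)
    (hρ₁ : IsLeast {r : ℝ | ∀ x : EuclideanSpace ℝ (Fin n₁), ∃ z ∈ Λ₁, dist x z ≤ r} ρ₁)
    (hρ₂ : IsLeast {r : ℝ | ∀ x : EuclideanSpace ℝ (Fin n₂), ∃ z ∈ Λ₂, dist x z ≤ r} ρ₂)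
    -- L appends zeros
    (L : (Fin n₂ → ℝ) → (Fin n₁ → ℝ))
    (hL : ∀ y i, L y i = if h : (i : ℕ) < n₂ then y ⟨i, h⟩ else 0)
    (Λ : Set (EuclideanSpace ℝ (Fin (n₁ + n₂))))
    (hΛ : Λ = {p | ∃ x ∈ Λ₁, ∃ y ∈ Λ₂,
      (∀ i : Fin n₁, p (Fin.castAdd n₂ i) = x i + (1 / 2) * L y i)
      ∧ (∀ j : Fin n₂, p (Fin.natAdd n₁ j) = (Real.sqrt 3 / 2) * y j)}) :
    -- Λ is a full rank lattice,
    (∃ b : Module.Basis (Fin (n₁ + n₂)) ℝ (EuclideanSpace ℝ (Fin (n₁ + n₂))),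
      Λ = (Submodule.span ℤ (Set.range b) : Submodule ℤ (EuclideanSpace ℝ (Fin (n₁ + n₂)))))
    -- with packing radius at least 1,
    ∧ (∀ p ∈ Λ, p ≠ 0 → 2 ≤ ‖p‖)
    -- and covering radius at most √(ρ₁² + (3/4)ρ₂²)
    ∧ (∀ q : EuclideanSpace ℝ (Fin (n₁ + n₂)), ∃ p ∈ Λ,
        dist q p ≤ Real.sqrt (ρ₁ ^ 2 + (3 / 4) * ρ₂ ^ 2)) := by
    -- Λ is the image of Λ₁ × Λ₂ under the linear equivalence `fwd`
  have hΛ' : Λ = fwd n₁ n₂ '' (Λ₁ ×ˢ Λ₂) := by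
    rw [hΛ]
    ext p
    constructor
    · rintro ⟨x, hx, y, hy, h1, h2⟩
      refine ⟨(x, y), Set.mk_mem_prod hx hy, ?_⟩
      ext k
      induction k using Fin.addCases with
      | left i => rw [fwd_castAdd, h1 i, hL]; rfl
      | right j => rw [fwd_natAdd, h2 j]
    · rintro ⟨⟨x, y⟩, ⟨hx, hy⟩, rfl⟩
      exact ⟨x, hx, y, hy, fun i => by rw [fwd_castAdd, hL]; rfl,
        fun j => by rw [fwd_natAdd]⟩
  refine ⟨⟨((b₁.prod b₂).map (E n₁ n₂)).reindex finSumFinEquiv, ?_⟩, ?_, ?_⟩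
  · rw [hΛ', span_range_eq n₁ n₂ b₁ b₂, hΛ₁, hΛ₂]
  · -- packing
    intro p hp hp0
    rw [hΛ'] at hp
    obtain ⟨z, ⟨hz1, hz2⟩, rfl⟩ := hp
    have hI : |inner ℝ z.1 (L0 n₁ n₂ z.2)| ≤ ‖z.1‖ * ‖z.2‖ := by
      have := abs_real_inner_le_norm z.1 (L0 n₁ n₂ z.2)
      rwa [norm_L0 n₁ n₂ hn] at this
    have hSQ : ‖fwd n₁ n₂ z‖ ^ 2 = ‖z.1‖ ^ 2 + inner ℝ z.1 (L0 n₁ n₂ z.2) + ‖z.2‖ ^ 2 :=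
      norm_fwd_sq' n₁ n₂ z hn
    have ha : z.1 = 0 ∨ 2 ≤ ‖z.1‖ := by
      by_cases h : z.1 = 0
      · exact Or.inl h
      · have := hpack₁.1 z.1 hz1 h; right; linarith
    have hb : z.2 = 0 ∨ 2 ≤ ‖z.2‖ := by
      by_cases h : z.2 = 0
      · exact Or.inl h
      · have := hpack₂.1 z.2 hz2 h; right; linarith
    have hz0 : ¬(z.1 = 0 ∧ z.2 = 0) := by
      rintro ⟨h1, h2⟩
      apply hp0
      have hz : z = 0 := Prod.ext h1 h2
      rw [hz]
      exact map_zero (E n₁ n₂)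
    have habs := abs_le.1 hI
    have h4 : 4 ≤ ‖fwd n₁ n₂ z‖ ^ 2 := by
      rw [hSQ]
      rcases ha with ha | ha <;> rcases hb with hb | hb
      · exact absurd ⟨ha, hb⟩ hz0
      · rw [ha] at habs ⊢
        simp only [norm_zero, zero_mul] at habs ⊢
        nlinarith [habs.1, habs.2]
      · rw [hb] at habs ⊢
        simp only [norm_zero, mul_zero] at habs ⊢
        nlinarith [habs.1, habs.2]
      · nlinarith [habs.1, habs.2, sq_nonneg (‖z.1‖ - ‖z.2‖),
          mul_nonneg (sub_nonneg.2 ha) (sub_nonneg.2 hb)]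
    nlinarith [norm_nonneg (fwd n₁ n₂ z), h4]
  · -- covering
    intro q
    have hρ₁0 : 0 ≤ ρ₁ := by
      obtain ⟨z, _, hd⟩ := hρ₁.1 0
      exact le_trans dist_nonneg hd
    have hρ₂0 : 0 ≤ ρ₂ := by
      obtain ⟨z, _, hd⟩ := hρ₂.1 0
      exact le_trans dist_nonneg hd
    set y2 : EuclideanSpace ℝ (Fin n₂) :=
      (WithLp.toLp 2 fun j => (2 / Real.sqrt 3) * q (Fin.natAdd n₁ j)) with hy2
    obtain ⟨y, hy, hdy⟩ := hρ₂.1 y2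
    set x1 : EuclideanSpace ℝ (Fin n₁) :=
      (WithLp.toLp 2 fun i => q (Fin.castAdd n₂ i) - (1 / 2) * L0 n₁ n₂ y i) with hx1
    obtain ⟨x, hx, hdx⟩ := hρ₁.1 x1
    refine ⟨fwd n₁ n₂ (x, y),
      by rw [hΛ']; exact Set.mem_image_of_mem _ (Set.mk_mem_prod hx hy), ?_⟩
    have h3 : Real.sqrt 3 ^ 2 = 3 := sq_sqrt3
    have h3' : Real.sqrt 3 ≠ 0 := sqrt3_ne
    have hsplit : dist q (fwd n₁ n₂ (x, y)) ^ 2 = dist x1 x ^ 2 + 3 / 4 * dist y2 y ^ 2 := by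
      rw [dist_eq_norm, dist_eq_norm, dist_eq_norm, normsq, normsq, normsq, Fin.sum_univ_add]
      simp only [PiLp.sub_apply, fwd_castAdd, fwd_natAdd, hx1, hy2, PiLp.toLp_apply]
      rw [Finset.mul_sum]
      congr 1
      · exact Finset.sum_congr rfl fun i _ => by ring
      · refine Finset.sum_congr rfl fun j _ => ?_
        have key : q (Fin.natAdd n₁ j) - Real.sqrt 3 / 2 * y j
            = Real.sqrt 3 / 2 * ((2 / Real.sqrt 3) * q (Fin.natAdd n₁ j) - y j) := by
          field_simp
        rw [key, mul_pow]
        have h34 : (Real.sqrt 3 / 2) ^ 2 = 3 / 4 := by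
          rw [div_pow, h3]; norm_num
        rw [h34]
    have hb1 : dist x1 x ^ 2 ≤ ρ₁ ^ 2 := pow_le_pow_left₀ dist_nonneg hdx 2
    have hb2 : dist y2 y ^ 2 ≤ ρ₂ ^ 2 := pow_le_pow_left₀ dist_nonneg hdy 2
    have key : dist q (fwd n₁ n₂ (x, y)) ^ 2 ≤ ρ₁ ^ 2 + (3 / 4) * ρ₂ ^ 2 := by
      rw [hsplit]; linarith
    calc dist q (fwd n₁ n₂ (x, y)) = Real.sqrt (dist q (fwd n₁ n₂ (x, y)) ^ 2) :=
          (Real.sqrt_sq dist_nonneg).symm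
      _ ≤ Real.sqrt (ρ₁ ^ 2 + (3 / 4) * ρ₂ ^ 2) := Real.sqrt_le_sqrt key
end PiThree
end

section
/- If Λ₁ ⊆ ℝ^{n₁} and Λ₂ ⊆ ℝ^{n₂} are full rank lattices with covering-packing ratios ρ₁ and ρ₂, then the direct sum Λ₁ ⊕ Λ₂ ⊆ ℝ^{n₁+n₂} is a full rank lattice with covering-packing ratio at most √(ρ₁² + ρ₂²). -/
open Submodule Set

noncomputable def esplit (n₁ n₂ : ℕ) :
    EuclideanSpace ℝ (Fin (n₁ + n₂)) ≃ₗ[ℝ]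
      EuclideanSpace ℝ (Fin n₁) × EuclideanSpace ℝ (Fin n₂) where
  toFun p := (WithLp.toLp 2 (fun i => p (Fin.castAdd n₂ i)), WithLp.toLp 2 (fun j => p (Fin.natAdd n₁ j)))
  invFun xy := WithLp.toLp 2 (fun k => Fin.addCases (motive := fun _ => ℝ) (fun i => xy.1 i) (fun j => xy.2 j) k)
  map_add' _ _ := rfl
  map_smul' _ _ := rfl
  left_inv p := by
    ext k
    refine Fin.addCases (fun i => ?_) (fun j => ?_) k <;> simp
  right_inv xy := by
    refine Prod.ext ?_ ?_ <;> ext i <;> simp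

lemma esplit_norm (n₁ n₂ : ℕ) (p : EuclideanSpace ℝ (Fin (n₁ + n₂))) :
    ‖p‖ = Real.sqrt (‖(esplit n₁ n₂ p).1‖ ^ 2 + ‖(esplit n₁ n₂ p).2‖ ^ 2) := by
  have h1 : ‖(esplit n₁ n₂ p).1‖ ^ 2 = ∑ i, ‖(esplit n₁ n₂ p).1 i‖ ^ 2 := by
    rw [EuclideanSpace.norm_eq, Real.sq_sqrt (by positivity)]
  have h2 : ‖(esplit n₁ n₂ p).2‖ ^ 2 = ∑ i, ‖(esplit n₁ n₂ p).2 i‖ ^ 2 := by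
    rw [EuclideanSpace.norm_eq, Real.sq_sqrt (by positivity)]
  rw [EuclideanSpace.norm_eq, h1, h2,
    Fin.sum_univ_add (f := fun k => ‖p k‖ ^ 2)]
  rfl

lemma esplit_dist (n₁ n₂ : ℕ) (p q : EuclideanSpace ℝ (Fin (n₁ + n₂))) :
    dist p q = Real.sqrt (dist (esplit n₁ n₂ p).1 (esplit n₁ n₂ q).1 ^ 2
      + dist (esplit n₁ n₂ p).2 (esplit n₁ n₂ q).2 ^ 2) := by
  have h1 : dist (esplit n₁ n₂ p).1 (esplit n₁ n₂ q).1 ^ 2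
      = ∑ i, dist ((esplit n₁ n₂ p).1 i) ((esplit n₁ n₂ q).1 i) ^ 2 := by
    rw [EuclideanSpace.dist_eq, Real.sq_sqrt (by positivity)]
  have h2 : dist (esplit n₁ n₂ p).2 (esplit n₁ n₂ q).2 ^ 2
      = ∑ i, dist ((esplit n₁ n₂ p).2 i) ((esplit n₁ n₂ q).2 i) ^ 2 := by
    rw [EuclideanSpace.dist_eq, Real.sq_sqrt (by positivity)]
  rw [EuclideanSpace.dist_eq, h1, h2,
    Fin.sum_univ_add (f := fun k => dist (p k) (q k) ^ 2)]
  rfl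

lemma span_prod_eq {M M' : Type*} [AddCommGroup M] [AddCommGroup M']
    [Module ℝ M] [Module ℝ M'] {ι ι' : Type*} (b : Module.Basis ι ℝ M) (b' : Module.Basis ι' ℝ M') :
    (Submodule.span ℤ (Set.range (b.prod b')) : Submodule ℤ (M × M')) =
      (Submodule.span ℤ (Set.range b)).prod (Submodule.span ℤ (Set.range b')) := by
  apply le_antisymm
  · rw [Submodule.span_le]
    rintro _ ⟨i, rfl⟩
    rcases i with i | j
    · refine Submodule.mem_prod.2 ⟨?_, ?_⟩
      · rw [Module.Basis.prod_apply_inl_fst]; exact subset_span (mem_range_self i)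
      · rw [Module.Basis.prod_apply_inl_snd]; exact zero_mem _
    · refine Submodule.mem_prod.2 ⟨?_, ?_⟩
      · rw [Module.Basis.prod_apply_inr_fst]; exact zero_mem _
      · rw [Module.Basis.prod_apply_inr_snd]; exact subset_span (mem_range_self j)
  · have hmap1 : Submodule.map (LinearMap.inl ℤ M M') (Submodule.span ℤ (Set.range b))
        ≤ Submodule.span ℤ (Set.range (b.prod b')) := by
      rw [Submodule.map_span, Submodule.span_le]
      rintro _ ⟨_, ⟨i, rfl⟩, rfl⟩
      refine subset_span ⟨Sum.inl i, ?_⟩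
      exact Prod.ext (b.prod_apply_inl_fst b' i) (b.prod_apply_inl_snd b' i)
    have hmap2 : Submodule.map (LinearMap.inr ℤ M M') (Submodule.span ℤ (Set.range b'))
        ≤ Submodule.span ℤ (Set.range (b.prod b')) := by
      rw [Submodule.map_span, Submodule.span_le]
      rintro _ ⟨_, ⟨j, rfl⟩, rfl⟩
      refine subset_span ⟨Sum.inr j, ?_⟩
      exact Prod.ext (b.prod_apply_inr_fst b' j) (b.prod_apply_inr_snd b' j)
    rintro ⟨x, y⟩ hxy
    rcases Submodule.mem_prod.1 hxy with ⟨hx, hy⟩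
    have : (x, y) = (x, (0 : M')) + ((0 : M), y) := by simp
    rw [this]
    exact add_mem (hmap1 ⟨x, hx, rfl⟩) (hmap2 ⟨y, hy, rfl⟩)


/-- If `Λ₁ ⊆ ℝ^{n₁}` and `Λ₂ ⊆ ℝ^{n₂}` are full rank lattices with covering-packing
ratios `ρ₁` and `ρ₂` (both packing radii normalized to `1`), then the direct sum `Λ₁ ⊕ Λ₂ ⊆ ℝ^{n₁+n₂}` is a full rank lattice
with covering-packing ratio at most `√(ρ₁² + ρ₂²)`. -/
theorem direct_sum_covering_packing_ratio
    (n₁ n₂ : ℕ)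
    (Λ₁ : Set (EuclideanSpace ℝ (Fin n₁))) (Λ₂ : Set (EuclideanSpace ℝ (Fin n₂)))
    (b₁ : Module.Basis (Fin n₁) ℝ (EuclideanSpace ℝ (Fin n₁)))
    (b₂ : Module.Basis (Fin n₂) ℝ (EuclideanSpace ℝ (Fin n₂)))
    (hΛ₁ : Λ₁ = (Submodule.span ℤ (Set.range b₁) : Submodule ℤ (EuclideanSpace ℝ (Fin n₁))))
    (hΛ₂ : Λ₂ = (Submodule.span ℤ (Set.range b₂) : Submodule ℤ (EuclideanSpace ℝ (Fin n₂))))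
    -- packing radii normalized to 1, covering radii R₁, R₂
    (R₁ R₂ ρ₁ ρ₂ : ℝ)
    (hr₁ : IsGreatest {s : ℝ | ∀ u ∈ Λ₁, u ≠ 0 → 2 * s ≤ ‖u‖} 1)
    (hr₂ : IsGreatest {s : ℝ | ∀ u ∈ Λ₂, u ≠ 0 → 2 * s ≤ ‖u‖} 1)
    (hR₁ : IsLeast {r : ℝ | ∀ x : EuclideanSpace ℝ (Fin n₁), ∃ z ∈ Λ₁, dist x z ≤ r} R₁)
    (hR₂ : IsLeast {r : ℝ | ∀ x : EuclideanSpace ℝ (Fin n₂), ∃ z ∈ Λ₂, dist x z ≤ r} R₂)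
    -- covering-packing ratios
    (hρ₁ : ρ₁ = R₁ / 1) (hρ₂ : ρ₂ = R₂ / 1)
    -- Λ is the direct sum Λ₁ ⊕ Λ₂
    (Λ : Set (EuclideanSpace ℝ (Fin (n₁ + n₂))))
    (hΛ : Λ = {p | ∃ x ∈ Λ₁, ∃ y ∈ Λ₂,
      (∀ i : Fin n₁, p (Fin.castAdd n₂ i) = x i)
      ∧ (∀ j : Fin n₂, p (Fin.natAdd n₁ j) = y j)}) :
    -- Λ is a full rank lattice
    (∃ b : Module.Basis (Fin (n₁ + n₂)) ℝ (EuclideanSpace ℝ (Fin (n₁ + n₂))),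
      Λ = (Submodule.span ℤ (Set.range b) : Submodule ℤ (EuclideanSpace ℝ (Fin (n₁ + n₂)))))
    -- with covering-packing ratio at most √(ρ₁² + ρ₂²)
    ∧ (∃ r R : ℝ,
        IsGreatest {s : ℝ | ∀ p ∈ Λ, p ≠ 0 → 2 * s ≤ ‖p‖} r
        ∧ IsLeast {s : ℝ | ∀ q : EuclideanSpace ℝ (Fin (n₁ + n₂)), ∃ p ∈ Λ, dist q p ≤ s} R
        ∧ R ≤ Real.sqrt (ρ₁ ^ 2 + ρ₂ ^ 2) * r) := by
  set e := esplit n₁ n₂ with he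
  -- membership characterization
  have hmem : ∀ p : EuclideanSpace ℝ (Fin (n₁ + n₂)),
      p ∈ Λ ↔ (e p).1 ∈ Λ₁ ∧ (e p).2 ∈ Λ₂ := by
    intro p
    rw [hΛ]
    constructor
    · rintro ⟨x, hx, y, hy, h1, h2⟩
      have hx' : (e p).1 = x := PiLp.ext h1
      have hy' : (e p).2 = y := PiLp.ext h2
      exact ⟨hx' ▸ hx, hy' ▸ hy⟩
    · rintro ⟨h1, h2⟩
      exact ⟨_, h1, _, h2, fun i => rfl, fun j => rfl⟩
  -- p recovered from its components
  have hrec : ∀ (x : EuclideanSpace ℝ (Fin n₁)) (y : EuclideanSpace ℝ (Fin n₂)),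
      e (e.symm (x, y)) = (x, y) := fun x y => e.apply_symm_apply _
  constructor
  · -- full rank lattice
    refine ⟨((b₁.prod b₂).map e.symm).reindex finSumFinEquiv, ?_⟩
    have hrange : Set.range (((b₁.prod b₂).map e.symm).reindex finSumFinEquiv)
        = ⇑e.symm '' Set.range (b₁.prod b₂) := by
      rw [Module.Basis.range_reindex]
      ext z
      simp [Module.Basis.map_apply, ← Set.range_comp, Function.comp]
    ext p
    rw [hmem p, SetLike.mem_coe, hrange]
    have h0 : (⇑e.symm '' Set.range (b₁.prod b₂)) =
        ⇑((e.symm.restrictScalars ℤ).toLinearMap) '' Set.range (b₁.prod b₂) := rfl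
    rw [h0, ← Submodule.map_span, span_prod_eq b₁ b₂, hΛ₁, hΛ₂]
    constructor
    · rintro ⟨h1, h2⟩
      refine ⟨e p, Submodule.mem_prod.2 ⟨h1, h2⟩, ?_⟩
      exact e.symm_apply_apply p
    · rintro ⟨z, hz, hfz⟩
      rcases Submodule.mem_prod.1 hz with ⟨h1, h2⟩
      have hez : e p = z := by
        rw [← hfz]
        exact e.apply_symm_apply z
      rw [hez]
      exact ⟨h1, h2⟩
  · -- quantitative part
    have hzero1 : (0 : EuclideanSpace ℝ (Fin n₁)) ∈ Λ₁ := by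
      rw [hΛ₁]; exact zero_mem _
    have hzero2 : (0 : EuclideanSpace ℝ (Fin n₂)) ∈ Λ₂ := by
      rw [hΛ₂]; exact zero_mem _
    -- packing radius of Λ is 1
    have hpack : IsGreatest {s : ℝ | ∀ p ∈ Λ, p ≠ 0 → 2 * s ≤ ‖p‖} 1 := by
      constructor
      · intro p hp hp0
        rcases (hmem p).1 hp with ⟨h1, h2⟩
        have hne : (e p).1 ≠ 0 ∨ (e p).2 ≠ 0 := by
          by_contra h
          push_neg at h
          apply hp0
          have : e p = 0 := Prod.ext h.1 h.2
          exact e.map_eq_zero_iff.1 this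
        have hnorm : ‖p‖ = Real.sqrt (‖(e p).1‖ ^ 2 + ‖(e p).2‖ ^ 2) := esplit_norm n₁ n₂ p
        rcases hne with h | h
        · have h2le : 2 * 1 ≤ ‖(e p).1‖ := hr₁.1 _ h1 h
          calc 2 * 1 ≤ ‖(e p).1‖ := h2le
            _ = Real.sqrt (‖(e p).1‖ ^ 2) := (Real.sqrt_sq (norm_nonneg _)).symm
            _ ≤ ‖p‖ := by
                rw [hnorm]
                exact Real.sqrt_le_sqrt (le_add_of_nonneg_right (by positivity))
        · have h2le : 2 * 1 ≤ ‖(e p).2‖ := hr₂.1 _ h2 h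
          calc 2 * 1 ≤ ‖(e p).2‖ := h2le
            _ = Real.sqrt (‖(e p).2‖ ^ 2) := (Real.sqrt_sq (norm_nonneg _)).symm
            _ ≤ ‖p‖ := by
                rw [hnorm]
                exact Real.sqrt_le_sqrt (le_add_of_nonneg_left (by positivity))
      · intro s hs
        apply hr₁.2
        intro u hu hu0
        have hpΛ : e.symm (u, 0) ∈ Λ := by
          rw [hmem]
          rw [hrec u 0]
          exact ⟨hu, hzero2⟩
        have hp0 : e.symm (u, 0) ≠ 0 := by
          intro h
          apply hu0
          have : ((u, (0 : EuclideanSpace ℝ (Fin n₂)))) = 0 := by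
            rw [← hrec u 0, h, map_zero]
          exact congrArg Prod.fst this
        have := hs _ hpΛ hp0
        rwa [esplit_norm, hrec u 0, norm_zero, zero_pow (by norm_num), add_zero,
          Real.sqrt_sq (norm_nonneg _)] at this
    -- covering radius
    set C := Real.sqrt (R₁ ^ 2 + R₂ ^ 2) with hC
    set S := {s : ℝ | ∀ q : EuclideanSpace ℝ (Fin (n₁ + n₂)), ∃ p ∈ Λ, dist q p ≤ s} with hS
    have hCS : C ∈ S := by
      intro q
      obtain ⟨z₁, hz₁, hd₁⟩ := hR₁.1 (e q).1
      obtain ⟨z₂, hz₂, hd₂⟩ := hR₂.1 (e q).2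
      refine ⟨e.symm (z₁, z₂), ?_, ?_⟩
      · rw [hmem, hrec]; exact ⟨hz₁, hz₂⟩
      · rw [esplit_dist, hrec]
        apply Real.sqrt_le_sqrt
        have d1 := dist_nonneg (x := (e q).1) (y := z₁)
        have d2 := dist_nonneg (x := (e q).2) (y := z₂)
        nlinarith
    have hSne : S.Nonempty := ⟨C, hCS⟩
    have hSbdd : BddBelow S := by
      refine ⟨0, fun s hs => ?_⟩
      obtain ⟨p, _, hp⟩ := hs 0
      exact le_trans dist_nonneg hp
    have hC0 : 0 ≤ C := Real.sqrt_nonneg _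
    have hsInfC : sInf S ≤ C := csInf_le hSbdd hCS
    -- Λ is closed
    have hclosed : IsClosed Λ := by
      have hc1 : IsClosed Λ₁ := by
        rw [hΛ₁]
        have : IsClosed ((Submodule.span ℤ (Set.range b₁)).toAddSubgroup :
            Set (EuclideanSpace ℝ (Fin n₁))) := AddSubgroup.isClosed_of_discrete
        exact this
      have hc2 : IsClosed Λ₂ := by
        rw [hΛ₂]
        have : IsClosed ((Submodule.span ℤ (Set.range b₂)).toAddSubgroup :
            Set (EuclideanSpace ℝ (Fin n₂))) := AddSubgroup.isClosed_of_discrete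
        exact this
      have hΛeq : Λ = ⇑e ⁻¹' (Λ₁ ×ˢ Λ₂) := by
        ext p; rw [hmem p]; simp [Set.mem_prod]
      rw [hΛeq]
      exact (hc1.prod hc2).preimage e.toLinearMap.continuous_of_finiteDimensional
    -- sInf S is attained
    have hmin : ∀ q : EuclideanSpace ℝ (Fin (n₁ + n₂)), ∃ p ∈ Λ, dist q p ≤ sInf S := by
      intro q
      have hK : IsCompact (Λ ∩ Metric.closedBall q (C + 1)) :=
        (isCompact_closedBall q (C + 1)).inter_left hclosed
      have hKne : (Λ ∩ Metric.closedBall q (C + 1)).Nonempty := by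
        obtain ⟨p, hp, hd⟩ := hCS q
        exact ⟨p, hp, Metric.mem_closedBall.2 (by rw [dist_comm]; linarith)⟩
      obtain ⟨p₀, hp₀K, hp₀min⟩ := hK.exists_isMinOn hKne
        (Continuous.continuousOn (continuous_const.dist continuous_id))
      refine ⟨p₀, hp₀K.1, ?_⟩
      have key : ∀ ε > 0, ε ≤ 1 → dist q p₀ ≤ sInf S + ε := by
        intro ε hε hε1
        obtain ⟨s, hsS, hslt⟩ := exists_lt_of_csInf_lt hSne
          (show sInf S < sInf S + ε by linarith)
        obtain ⟨p, hp, hd⟩ := hsS q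
        have hpK : p ∈ Λ ∩ Metric.closedBall q (C + 1) := by
          refine ⟨hp, Metric.mem_closedBall.2 ?_⟩
          rw [dist_comm]
          linarith
        have := hp₀min hpK
        simp only [Set.mem_setOf_eq] at this
        calc dist q p₀ ≤ dist q p := this
          _ ≤ s := hd
          _ ≤ sInf S + ε := le_of_lt hslt
      by_contra h
      push_neg at h
      have hδ : 0 < dist q p₀ - sInf S := by linarith
      rcases le_or_gt (dist q p₀ - sInf S) 1 with h1 | h1
      · have := key ((dist q p₀ - sInf S) / 2) (by linarith) (by linarith)
        linarith
      · have := key 1 one_pos le_rfl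
        linarith
    have hcov : IsLeast S (sInf S) := ⟨hmin, fun s hs => csInf_le hSbdd hs⟩
    refine ⟨1, sInf S, hpack, hcov, ?_⟩
    rw [hρ₁, hρ₂]
    simp only [div_one, mul_one]
    exact hsInfC
end
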